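/- arXiv:2501.15952 — 6 statements merged into one kernel-verified Lean document; each statement's English description precedes it below -/
import Mathlib

section
/- Let G be a prison-free graph and let K⊆V(G) be a set of 4 vertices inducing a complete graph K4 in G. Then there exists a set F⊆V(G) with K⊆F such that G[F] is complete multipartite. Furthermore, if F is inclusion-wise maximal among sets containing K that induce a complete multipartite subgraph, then for every vertex v∈V(G)∖F, the neighborhood N(v) intersects at most one class of F. -/
namespace PrisonFreePaper

variable {V : Type*}

/-- The prison graph on 5 vertices: `K₅` minus the two edges `{4,2}` and `{4,3}`
(which share the vertex `4`).  Thus `{0,1,2,3}` is a 4-clique and the vertex `4`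
is adjacent exactly to `0` and `1`. -/
def prison : SimpleGraph (Fin 5) where
  Adj a b := a ≠ b ∧ ¬((a = 4 ∧ (b = 2 ∨ b = 3)) ∨ (b = 4 ∧ (a = 2 ∨ a = 3)))
  symm := by
    constructor
    rintro a b ⟨h1, h2⟩
    exact ⟨h1.symm, by tauto⟩
  loopless := by
    constructor
    rintro a ⟨h, _⟩
    exact h rfl

/-- `P` is a 5-vertex set inducing a subgraph of `G` isomorphic to the prison. -/
def InducesPrison (G : SimpleGraph V) (P : Set V) : Prop :=
  ∃ f : Fin 5 ↪ V, Set.range f = P ∧ ∀ a b, G.Adj (f a) (f b) ↔ prison.Adj a b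

/-- `G` is prison-free: no 5-vertex set induces a prison. -/
def PrisonFree (G : SimpleGraph V) : Prop :=
  ¬ ∃ P : Set V, InducesPrison G P

/-- `P` is the set of classes witnessing that the induced subgraph `G[F]` is
complete multipartite: the classes are nonempty, pairwise disjoint, their union
is `F`, and two vertices of `F` are adjacent iff they lie in different classes. -/
def IsCMP (G : SimpleGraph V) (F : Set V) (P : Set (Set V)) : Prop :=
  (∀ C ∈ P, C.Nonempty ∧ C ⊆ F) ∧
  (⋃₀ P = F) ∧
  (∀ C ∈ P, ∀ D ∈ P, C ≠ D → Disjoint C D) ∧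
  (∀ u ∈ F, ∀ v ∈ F, (G.Adj u v ↔ ¬ ∃ C ∈ P, u ∈ C ∧ v ∈ C))

/-- The induced subgraph `G[F]` is complete multipartite. -/
def CMP (G : SimpleGraph V) (F : Set V) : Prop := ∃ P, IsCMP G F P

/-- The induced subgraph `G[F]` is complete multipartite with at least `p` classes. -/
def CMPAtLeast (G : SimpleGraph V) (F : Set V) (p : ℕ) : Prop :=
  ∃ P, IsCMP G F P ∧ ∃ f : Fin p ↪ Set V, ∀ i, f i ∈ P

/-- `F ∈ cmd_p` of the induced subgraph of `G` on the ground set `W`: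
`F` is an inclusion-wise maximal subset of `W` inducing a complete multipartite
graph with at least `p` classes. -/
def Cmd (G : SimpleGraph V) (W : Set V) (p : ℕ) (F : Set V) : Prop :=
  F ⊆ W ∧ CMPAtLeast G F p ∧
    ∀ F', F' ⊆ W → F ⊆ F' → CMPAtLeast G F' p → F' = F

/-- The neighbourhood of `v` in `G` intersects at most one class of `P`. -/
def MeetsAtMostOneClass (G : SimpleGraph V) (P : Set (Set V)) (v : V) : Prop :=
  ∀ C ∈ P, ∀ D ∈ P, (∃ x ∈ C, G.Adj v x) → (∃ y ∈ D, G.Adj v y) → C = D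

/-- The induced subgraph `G[X]`, viewed as a graph on the same vertex set
(only edges with both endpoints in `X` are kept). -/
def inducedOn (G : SimpleGraph V) (X : Set V) : SimpleGraph V where
  Adj a b := G.Adj a b ∧ a ∈ X ∧ b ∈ X
  symm := by constructor; rintro a b ⟨h, ha, hb⟩; exact ⟨h.symm, hb, ha⟩
  loopless := by constructor; rintro a ⟨h, _⟩; exact G.irrefl h

/-- The set of edges of `G` with both endpoints in `X`, i.e. the edges of `G[X]`. -/
def edgesWithin (G : SimpleGraph V) (X : Set V) : Set (Sym2 V) :=
  (inducedOn G X).edgeSet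

/-- `(G,k)` is a yes-instance of Prison-Free Edge Deletion. -/
def DeletionYes (G : SimpleGraph V) (k : ℕ) : Prop :=
  ∃ A : Set (Sym2 V), A ⊆ G.edgeSet ∧ A.Finite ∧ A.ncard ≤ k ∧
    PrisonFree (G.deleteEdges A)

/-- `P` is a strict supergraph of a prison in `G`: a 5-vertex set whose induced
subgraph is `K₅` or `K₅` minus one edge (at most one non-adjacent pair). -/
def StrictSupPrison (G : SimpleGraph V) (P : Set V) : Prop :=
  P.ncard = 5 ∧ ∃ u v : V, ∀ x ∈ P, ∀ y ∈ P, x ≠ y → ¬ G.Adj x y →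
    (x = u ∧ y = v) ∨ (x = v ∧ y = u)

/-- `P` is a supergraph of a prison in `G`: a 5-vertex set whose induced subgraph
contains a prison on `P` as a spanning subgraph, i.e. all non-adjacent pairs in `P`
are among two pairs sharing a common vertex. -/
def SupPrison (G : SimpleGraph V) (P : Set V) : Prop :=
  P.ncard = 5 ∧ ∃ w u v : V, ∀ x ∈ P, ∀ y ∈ P, x ≠ y → ¬ G.Adj x y →
    (({x, y} : Set V) = {w, u} ∨ ({x, y} : Set V) = {w, v})

/-- Hypothesis (H1): every edge of `G` that does not have both endpoints in `S`
is contained in a strict supergraph of a prison in `G`. -/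
def H1 (G : SimpleGraph V) (S : Set V) : Prop :=
  ∀ u v : V, G.Adj u v → ¬(u ∈ S ∧ v ∈ S) →
    ∃ P, StrictSupPrison G P ∧ u ∈ P ∧ v ∈ P

/-- Hypothesis (H2): every 5-vertex set inducing a prison in `G` contains at least
two edges with both endpoints in `S`. -/
def H2 (G : SimpleGraph V) (S : Set V) : Prop :=
  ∀ P, InducesPrison G P →
    ∃ e₁ e₂ : Sym2 V, e₁ ≠ e₂ ∧ e₁ ∈ edgesWithin G (P ∩ S) ∧ e₂ ∈ edgesWithin G (P ∩ S)

/-- `B`: the edges of `G−S` lying in no triangle of `G−S`. -/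
def BSet (G : SimpleGraph V) (S : Set V) : Set (Sym2 V) :=
  {e ∈ edgesWithin G Sᶜ | ¬ ∃ w ∈ Sᶜ, ∀ x ∈ e, G.Adj w x}

/-- `B_e` for the edge `e = ab` of `G[S]`: the edges of `B` both of whose endpoints
are adjacent in `G` to both `a` and `b`. -/
def BOf (G : SimpleGraph V) (S : Set V) (a b : V) : Set (Sym2 V) :=
  {f ∈ BSet G S | ∀ x ∈ f, G.Adj x a ∧ G.Adj x b}

/-- `V(B_e)`: the set of endpoints of the edges of `B_e`. -/
def BVerts (G : SimpleGraph V) (S : Set V) (a b : V) : Set V :=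
  {x | ∃ f ∈ BOf G S a b, x ∈ f}

/-- The graph `G ∪ A` obtained by adding the pairs in `A` as edges. -/
def addEdges (G : SimpleGraph V) (A : Set (Sym2 V)) : SimpleGraph V :=
  G ⊔ SimpleGraph.fromEdgeSet A

/-- `A` is a prison-free completion set for `G`: a set of non-edges (unordered
pairs of distinct vertices not adjacent in `G`) whose addition makes `G` prison-free. -/
def CompletionSet (G : SimpleGraph V) (A : Set (Sym2 V)) : Prop :=
  (∀ e ∈ A, ¬ e.IsDiag) ∧ (∀ e ∈ A, e ∉ G.edgeSet) ∧ PrisonFree (addEdges G A)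

/-- `A` is a minimal prison-free completion set for `G`. -/
def MinCompletionSet (G : SimpleGraph V) (A : Set (Sym2 V)) : Prop :=
  CompletionSet G A ∧ ∀ A' ⊂ A, ¬ CompletionSet G A'

/-- `A` is a solution to the instance `(G,k)` of Prison-Free Edge Completion:
a prison-free completion set of size at most `k`. -/
def Solution (G : SimpleGraph V) (k : ℕ) (A : Set (Sym2 V)) : Prop :=
  CompletionSet G A ∧ A.Finite ∧ A.ncard ≤ k

/-- `A` is a minimal solution to `(G,k)`: a solution no proper subset of which is a
prison-free completion set. -/
def MinSolution (G : SimpleGraph V) (k : ℕ) (A : Set (Sym2 V)) : Prop :=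
  Solution G k A ∧ ∀ A' ⊂ A, ¬ CompletionSet G A'

/-- `K` is a set of 4 vertices inducing a complete graph `K₄` in `G`. -/
def IsK4 (G : SimpleGraph V) (K : Set V) : Prop :=
  K.ncard = 4 ∧ ∀ u ∈ K, ∀ v ∈ K, u ≠ v → G.Adj u v

/-- The modulator property of the set `S` (output of the sunflower-based
Lemma): for every prison `P` in `G` and every edge set `A ⊆ E(G)` with `|A| ≤ k`,
if deleting `A` from `G[S]` yields a prison-free graph then `A` contains an edge
of `G[P]`. -/
def GoodModulator (G : SimpleGraph V) (k : ℕ) (S : Set V) : Prop :=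
  ∀ P : Set V, InducesPrison G P →
    ∀ A : Set (Sym2 V), A ⊆ G.edgeSet → A.Finite → A.ncard ≤ k →
      PrisonFree ((inducedOn G S).deleteEdges A) →
      ∃ e ∈ A, e ∈ edgesWithin G P

/-- Hypothesis (H3): for every `F' ∈ cmd₃(G−S)` and every inclusion-wise maximal
set `F ⊇ F'` such that `G[F]` is complete multipartite, some vertex outside `F`
has neighbours in at least two classes of `F`. -/
def H3 (G : SimpleGraph V) (S : Set V) : Prop :=
  ∀ F', Cmd G Sᶜ 3 F' → ∀ F : Set V, F' ⊆ F → CMP G F →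
    (∀ F'', F ⊆ F'' → CMP G F'' → F'' = F) →
    ∃ v ∉ F, ∃ P, IsCMP G F P ∧
      ∃ C ∈ P, ∃ D ∈ P, C ≠ D ∧ (∃ x ∈ C, G.Adj v x) ∧ ∃ y ∈ D, G.Adj v y

/-- `F` is an inclusion-wise maximal subset of `W` inducing a complete
multipartite subgraph of `G`. -/
def MaxCMPon (G : SimpleGraph V) (W F : Set V) : Prop :=
  F ⊆ W ∧ CMP G F ∧ ∀ F'', F'' ⊆ W → F ⊆ F'' → CMP G F'' → F'' = F


lemma prison_of (G : SimpleGraph V) {p q r s t : V}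
    (hpq : G.Adj p q) (hpr : G.Adj p r) (hps : G.Adj p s)
    (hqr : G.Adj q r) (hqs : G.Adj q s) (hrs : G.Adj r s)
    (htp : G.Adj t p) (htq : G.Adj t q)
    (htr : ¬ G.Adj t r) (hts : ¬ G.Adj t s) :
    ∃ P : Set V, InducesPrison G P := by
  have h1 : p ≠ q := hpq.ne
  have h2 : p ≠ r := hpr.ne
  have h3 : p ≠ s := hps.ne
  have h4 : q ≠ r := hqr.ne
  have h5 : q ≠ s := hqs.ne
  have h6 : r ≠ s := hrs.ne
  have h7 : t ≠ p := htp.ne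
  have h8 : t ≠ q := htq.ne
  have h9 : t ≠ r := fun h => hts (h ▸ hrs)
  have h10 : t ≠ s := fun h => htr (h ▸ hrs.symm)
  have hinj : Function.Injective ![p, q, r, s, t] := by
    intro a b hab
    fin_cases a <;> fin_cases b <;> simp_all
  refine ⟨Set.range ![p, q, r, s, t], ⟨⟨![p, q, r, s, t], hinj⟩, rfl, ?_⟩⟩
  intro a b
  have hqp := hpq.symm; have hrp := hpr.symm; have hsp := hps.symm
  have hrq := hqr.symm; have hsq := hqs.symm; have hsr := hrs.symm
  have hpt := htp.symm; have hqt := htq.symm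
  have hrt : ¬ G.Adj r t := fun h => htr h.symm
  have hst : ¬ G.Adj s t := fun h => hts h.symm
  have hloop : ∀ x : V, ¬ G.Adj x x := fun x => G.irrefl
  fin_cases a <;> fin_cases b <;> simp [prison] <;> tauto

/-- In a prison-free graph `G`, every 4-set `K` inducing `K₄`
extends to a set `F ⊇ K` inducing a complete multipartite graph; moreover, if `F`
is inclusion-wise maximal among such sets containing `K`, then the neighbourhood of
every vertex `v ∉ F` intersects at most one class of `F`. -/
theorem k4_extends_to_cmp {V : Type*} [Fintype V] (G : SimpleGraph V)
    (hG : PrisonFree G) (K : Set V) (hK : IsK4 G K) :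
    (∃ F : Set V, K ⊆ F ∧ CMP G F) ∧
    ∀ F : Set V, K ⊆ F → CMP G F →
      (∀ F' : Set V, K ⊆ F' → F ⊆ F' → CMP G F' → F' = F) →
      ∀ v ∉ F, ∀ P : Set (Set V), IsCMP G F P → MeetsAtMostOneClass G P v := by
  classical
  constructor
  · -- F = K works with singleton classes
    refine ⟨K, subset_rfl, (fun x => ({x} : Set V)) '' K, ?_, ?_, ?_, ?_⟩
    · rintro C ⟨x, hx, rfl⟩
      exact ⟨⟨x, rfl⟩, by simpa using hx⟩
    · ext u; simp
    · rintro C ⟨x, hx, rfl⟩ D ⟨y, hy, rfl⟩ hne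
      have : x ≠ y := by simpa using hne
      simp [this]
    · intro u hu w hw
      constructor
      · rintro h ⟨C, ⟨x, hx, rfl⟩, h1, h2⟩
        exact h.ne (by simp at h1 h2; rw [h1, h2])
      · intro hne
        refine hK.2 u hu w hw ?_
        rintro rfl
        exact hne ⟨{u}, ⟨u, hu, rfl⟩, rfl, rfl⟩
  · intro F hKF hCMP hmax v hv P hP C hC D hD hxE hyE
    obtain ⟨x, hxC, hvx⟩ := hxE
    obtain ⟨y, hyD, hvy⟩ := hyE
    by_contra hCD
    obtain ⟨hcls, hun, hdis, hadj⟩ := hP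
    -- basic helpers
    have hmemF : ∀ {u : V} {E : Set V}, E ∈ P → u ∈ E → u ∈ F :=
      fun hE hu => (hcls _ hE).2 hu
    have hclassUniq : ∀ {u : V} {E E' : Set V}, E ∈ P → E' ∈ P → u ∈ E → u ∈ E' → E = E' := by
      intro u E E' hE hE' hu hu'
      by_contra hne
      exact (hdis E hE E' hE' hne).ne_of_mem hu hu' rfl
    have hAdjDiff : ∀ {u w : V} {E E' : Set V}, E ∈ P → E' ∈ P → u ∈ E → w ∈ E' → E ≠ E' →
        G.Adj u w := by
      intro u w E E' hE hE' hu hw hne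
      refine (hadj u (hmemF hE hu) w (hmemF hE' hw)).2 ?_
      rintro ⟨C', hC', h1, h2⟩
      exact hne ((hclassUniq hE hC' hu h1).trans (hclassUniq hC' hE' h2 hw))
    have hNAdjSame : ∀ {u w : V} {E : Set V}, E ∈ P → u ∈ E → w ∈ E → ¬ G.Adj u w := by
      intro u w E hE hu hw h
      exact (hadj u (hmemF hE hu) w (hmemF hE hw)).1 h ⟨E, hE, hu, hw⟩
    -- the class of each vertex of K
    have hcl : ∀ k ∈ K, ∃ E ∈ P, k ∈ E := by
      intro k hk
      have : k ∈ ⋃₀ P := hun ▸ hKF hk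
      simpa using this
    choose! g hgP hgmem using hcl
    have hgInj : Set.InjOn g K := by
      intro k hk k' hk' heq
      by_contra hne
      exact hNAdjSame (hgP k hk) (hgmem k hk) (heq ▸ hgmem k' hk') (hK.2 k hk k' hk' hne)
    -- Step A : no mixed class
    have hfull : ∀ E ∈ P, ∀ z' ∈ E, G.Adj v z' → ∀ z ∈ E, G.Adj v z := by
      intro E hE z' hz' hvz' z hz
      by_contra hvz
      -- a neighbour class distinct from E
      obtain ⟨C0, hC0, x0, hx0, hvx0, hC0E⟩ :
          ∃ C0 ∈ P, ∃ x0 ∈ C0, G.Adj v x0 ∧ C0 ≠ E := by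
        by_cases hCE : C = E
        · exact ⟨D, hD, y, hyD, hvy, fun h => hCD (hCE.trans h.symm)⟩
        · exact ⟨C, hC, x, hxC, hvx, hCE⟩
      -- two K-classes avoiding C0 and E
      obtain ⟨A, hA', B, hB', hAB⟩ :
          ∃ A ∈ (g '' K) \ {C0, E}, ∃ B ∈ (g '' K) \ {C0, E}, A ≠ B := by
        have h4 : (g '' K).ncard = 4 := by
          rw [Set.ncard_image_of_injOn hgInj, hK.1]
        have hle : (g '' K).ncard ≤ ((g '' K) \ {C0, E}).ncard + ({C0, E} : Set (Set V)).ncard :=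
          Set.ncard_le_ncard_diff_add_ncard _ _ (Set.toFinite _)
        have h2 : ({C0, E} : Set (Set V)).ncard ≤ 2 := by
          apply le_trans (Set.ncard_insert_le _ _)
          simp
        have : 1 < ((g '' K) \ {C0, E}).ncard := by omega
        rw [Set.one_lt_ncard_iff (Set.toFinite _)] at this
        obtain ⟨A, B, hA, hB, hne⟩ := this
        exact ⟨A, hA, B, hB, hne⟩
      obtain ⟨⟨a, ha, rfl⟩, hAnot⟩ := hA'
      obtain ⟨⟨b, hb, rfl⟩, hBnot⟩ := hB'
      simp only [Set.mem_insert_iff, Set.mem_singleton_iff, not_or] at hAnot hBnot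
      obtain ⟨hAC0, hAE⟩ := hAnot
      obtain ⟨hBC0, hBE⟩ := hBnot
      have hAP := hgP a ha; have hBP := hgP b hb
      have haA := hgmem a ha; have hbB := hgmem b hb
      -- all cross-class adjacencies
      have hz'x0 : G.Adj z' x0 := hAdjDiff hE hC0 hz' hx0 (Ne.symm hC0E)
      have hz'a : G.Adj z' a := hAdjDiff hE hAP hz' haA (Ne.symm hAE)
      have hz'b : G.Adj z' b := hAdjDiff hE hBP hz' hbB (Ne.symm hBE)
      have hzx0 : G.Adj z x0 := hAdjDiff hE hC0 hz hx0 (Ne.symm hC0E)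
      have hza : G.Adj z a := hAdjDiff hE hAP hz haA (Ne.symm hAE)
      have hzb : G.Adj z b := hAdjDiff hE hBP hz hbB (Ne.symm hBE)
      have hx0a : G.Adj x0 a := hAdjDiff hC0 hAP hx0 haA (Ne.symm hAC0)
      have hx0b : G.Adj x0 b := hAdjDiff hC0 hBP hx0 hbB (Ne.symm hBC0)
      have hab : G.Adj a b := hAdjDiff hAP hBP haA hbB hAB
      have hzz' : ¬ G.Adj z z' := hNAdjSame hE hz hz'
      by_cases hva : G.Adj v a <;> by_cases hvb : G.Adj v b
      · -- prison on K4 {a,b,z',v}, t = z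
        exact hG (prison_of G hab hz'a.symm hva.symm hz'b.symm hvb.symm hvz'.symm
          hza hzb hzz' (fun h => hvz h.symm))
      · -- v adj a, not b : K4 {x0,a,z,b}, t = v
        exact hG (prison_of G hx0a hzx0.symm hx0b (hza.symm) hab hzb
          hvx0 hva (fun h => hvz h) hvb)
      · -- v adj b, not a : K4 {x0,b,z,a}, t = v
        exact hG (prison_of G hx0b hzx0.symm hx0a hzb.symm hab.symm hza
          hvx0 hvb (fun h => hvz h) hva)
      · -- v not adj a,b : K4 {z',x0,a,b}, t = v
        exact hG (prison_of G hz'x0 hz'a hz'b hx0a hx0b hab hvz' hvx0 hva hvb)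
    -- Step B : at most one "empty" class
    have hempty : ∀ E1 ∈ P, ∀ E2 ∈ P, (∃ z1 ∈ E1, ¬ G.Adj v z1) →
        (∃ z2 ∈ E2, ¬ G.Adj v z2) → E1 = E2 := by
      intro E1 hE1 E2 hE2 ⟨z1, hz1, hvz1⟩ ⟨z2, hz2, hvz2⟩
      by_contra hne
      have hE1C : E1 ≠ C := fun h => hvz1 (hfull C hC x hxC hvx z1 (h ▸ hz1))
      have hE1D : E1 ≠ D := fun h => hvz1 (hfull D hD y hyD hvy z1 (h ▸ hz1))
      have hE2C : E2 ≠ C := fun h => hvz2 (hfull C hC x hxC hvx z2 (h ▸ hz2))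
      have hE2D : E2 ≠ D := fun h => hvz2 (hfull D hD y hyD hvy z2 (h ▸ hz2))
      -- K4 {x,y,z1,z2}, t = v
      exact hG (prison_of G (hAdjDiff hC hD hxC hyD hCD)
        (hAdjDiff hC hE1 hxC hz1 (Ne.symm hE1C)) (hAdjDiff hC hE2 hxC hz2 (Ne.symm hE2C))
        (hAdjDiff hD hE1 hyD hz1 (Ne.symm hE1D)) (hAdjDiff hD hE2 hyD hz2 (Ne.symm hE2D))
        (hAdjDiff hE1 hE2 hz1 hz2 hne) hvx hvy hvz1 hvz2)
    -- Build the larger CMP set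
    have hvnotF : ∀ {E : Set V}, E ∈ P → v ∉ E := fun hE h => hv (hmemF hE h)
    have hmain : CMP G (insert v F) := by
      by_cases hex : ∃ E0 ∈ P, ∃ z0 ∈ E0, ¬ G.Adj v z0
      · obtain ⟨E0, hE0, z0, hz0, hvz0⟩ := hex
        -- every class other than E0 is full, E0 is all non-adjacent
        have hE0empty : ∀ w ∈ E0, ¬ G.Adj v w :=
          fun w hw h => hvz0 (hfull E0 hE0 w hw h z0 hz0)
        have hother : ∀ E ∈ P, E ≠ E0 → ∀ w ∈ E, G.Adj v w := by
          intro E hE hne w hw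
          by_contra h
          exact hne (hempty E hE E0 hE0 ⟨w, hw, h⟩ ⟨z0, hz0, hvz0⟩)
        refine ⟨insert (insert v E0) (P \ {E0}), ?_, ?_, ?_, ?_⟩
        · rintro C' (rfl | ⟨hC', -⟩)
          · exact ⟨⟨v, Set.mem_insert _ _⟩,
              Set.insert_subset_insert (hcls _ hE0).2⟩
          · exact ⟨(hcls _ hC').1, ((hcls _ hC').2).trans (Set.subset_insert _ _)⟩
        · ext u
          simp only [Set.mem_sUnion, Set.mem_insert_iff, Set.mem_diff,
            Set.mem_singleton_iff]
          constructor
          · rintro ⟨t, (rfl | ⟨htP, -⟩), hut⟩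
            · rcases hut with rfl | hut
              · exact Or.inl rfl
              · exact Or.inr (hmemF hE0 hut)
            · exact Or.inr (hmemF htP hut)
          · rintro (heq | huF)
            · exact ⟨insert v E0, Or.inl rfl, Set.mem_insert_iff.2 (Or.inl heq)⟩
            · have : u ∈ ⋃₀ P := hun ▸ huF
              obtain ⟨t, htP, hut⟩ := this
              by_cases ht : t = E0
              · exact ⟨insert v E0, Or.inl rfl, Or.inr (ht ▸ hut)⟩
              · exact ⟨t, Or.inr ⟨htP, ht⟩, hut⟩
        · rintro C' (rfl | ⟨hC', hC'ne⟩) D' (rfl | ⟨hD', hD'ne⟩) hne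
          · exact absurd rfl hne
          · rw [Set.disjoint_left]
            rintro u (rfl | hu) huD'
            · exact hvnotF hD' huD'
            · exact (hdis E0 hE0 D' hD' (fun h => hD'ne h.symm)).ne_of_mem hu huD' rfl
          · rw [Set.disjoint_right]
            rintro u (rfl | hu) huC'
            · exact hvnotF hC' huC'
            · exact (hdis E0 hE0 C' hC' (fun h => hC'ne h.symm)).ne_of_mem hu huC' rfl
          · exact hdis C' hC' D' hD' hne
        · intro u hu w hw
          rcases hu with heq | huF
          on_goal 1 => obtain rfl : v = u := heq.symm
          all_goals rcases hw with heq2 | hwF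
          on_goal 1 => obtain rfl : v = w := heq2.symm
          on_goal 3 => obtain rfl : v = w := heq2.symm
          · simp only [SimpleGraph.irrefl, false_iff, not_not]
            exact ⟨insert v E0, Or.inl rfl, Set.mem_insert _ _, Set.mem_insert _ _⟩
          · obtain ⟨Ew, hEw, hwEw⟩ : ∃ E ∈ P, w ∈ E := by
              have : w ∈ ⋃₀ P := hun ▸ hwF
              simpa using this
            by_cases hEwE0 : Ew = E0
            · simp only [iff_false_intro (hE0empty w (hEwE0 ▸ hwEw)), false_iff, not_not]
              exact ⟨insert v E0, Or.inl rfl, Set.mem_insert _ _, Or.inr (hEwE0 ▸ hwEw)⟩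
            · simp only [iff_true_intro (hother Ew hEw hEwE0 w hwEw), true_iff]
              rintro ⟨C', (rfl | ⟨hC', -⟩), h1, h2⟩
              · rcases h2 with rfl | h2
                · exact hv hwF
                · exact hEwE0 (hclassUniq hEw hE0 hwEw h2)
              · exact hvnotF hC' h1
          · obtain ⟨Eu, hEu, huEu⟩ : ∃ E ∈ P, u ∈ E := by
              have : u ∈ ⋃₀ P := hun ▸ huF
              simpa using this
            by_cases hEuE0 : Eu = E0
            · have : ¬ G.Adj u v := fun h => hE0empty u (hEuE0 ▸ huEu) h.symm
              simp only [iff_false_intro this, false_iff, not_not]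
              exact ⟨insert v E0, Or.inl rfl, Or.inr (hEuE0 ▸ huEu), Set.mem_insert _ _⟩
            · have : G.Adj u v := (hother Eu hEu hEuE0 u huEu).symm
              simp only [iff_true_intro this, true_iff]
              rintro ⟨C', (rfl | ⟨hC', -⟩), h1, h2⟩
              · rcases h1 with rfl | h1
                · exact hv huF
                · exact hEuE0 (hclassUniq hEu hE0 huEu h1)
              · exact hvnotF hC' h2
          · rw [hadj u huF w hwF]
            constructor
            · rintro h ⟨C', (rfl | ⟨hC', -⟩), h1, h2⟩
              · rcases h1 with rfl | h1
                · exact hv huF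
                · rcases h2 with rfl | h2
                  · exact hv hwF
                  · exact h ⟨E0, hE0, h1, h2⟩
              · exact h ⟨C', hC', h1, h2⟩
            · rintro h ⟨C', hC', h1, h2⟩
              by_cases hCE0 : C' = E0
              · exact h ⟨insert v E0, Or.inl rfl, Or.inr (hCE0 ▸ h1), Or.inr (hCE0 ▸ h2)⟩
              · exact h ⟨C', Or.inr ⟨hC', hCE0⟩, h1, h2⟩
      · -- v adjacent to everything in F : new singleton class
        push_neg at hex
        have hall : ∀ w ∈ F, G.Adj v w := by
          intro w hwF
          obtain ⟨Ew, hEw, hwEw⟩ : ∃ E ∈ P, w ∈ E := by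
            have : w ∈ ⋃₀ P := hun ▸ hwF
            simpa using this
          exact hex Ew hEw w hwEw
        refine ⟨insert {v} P, ?_, ?_, ?_, ?_⟩
        · rintro C' (rfl | hC')
          · exact ⟨⟨v, rfl⟩, by simp⟩
          · exact ⟨(hcls _ hC').1, ((hcls _ hC').2).trans (Set.subset_insert _ _)⟩
        · ext u
          simp only [Set.mem_sUnion, Set.mem_insert_iff]
          constructor
          · rintro ⟨t, (rfl | htP), hut⟩
            · exact Or.inl hut
            · exact Or.inr (hmemF htP hut)
          · rintro (heq | huF)
            · exact ⟨{v}, Or.inl rfl, heq⟩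
            · have : u ∈ ⋃₀ P := hun ▸ huF
              obtain ⟨t, htP, hut⟩ := this
              exact ⟨t, Or.inr htP, hut⟩
        · rintro C' (rfl | hC') D' (rfl | hD') hne
          · exact absurd rfl hne
          · simpa using fun h => hvnotF hD' h
          · rw [Set.disjoint_right]
            rintro u rfl
            exact fun h => hvnotF hC' h
          · exact hdis C' hC' D' hD' hne
        · intro u hu w hw
          rcases hu with heq | huF
          on_goal 1 => obtain rfl : v = u := heq.symm
          all_goals rcases hw with heq2 | hwF
          on_goal 1 => obtain rfl : v = w := heq2.symm
          on_goal 3 => obtain rfl : v = w := heq2.symm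
          · simp only [SimpleGraph.irrefl, false_iff, not_not]
            exact ⟨{v}, Or.inl rfl, rfl, rfl⟩
          · simp only [iff_true_intro (hall w hwF), true_iff]
            rintro ⟨C', (rfl | hC'), h1, h2⟩
            · exact hv (h2 ▸ hwF)
            · exact hvnotF hC' h1
          · simp only [iff_true_intro (hall u huF).symm, true_iff]
            rintro ⟨C', (rfl | hC'), h1, h2⟩
            · exact hv (h1 ▸ huF)
            · exact hvnotF hC' h2
          · rw [hadj u huF w hwF]
            constructor
            · rintro h ⟨C', (rfl | hC'), h1, h2⟩
              · exact hv (h1 ▸ huF)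
              · exact h ⟨C', hC', h1, h2⟩
            · rintro h ⟨C', hC', h1, h2⟩
              exact h ⟨C', Or.inr hC', h1, h2⟩
    have := hmax (insert v F) (hKF.trans (Set.subset_insert _ _))
      (Set.subset_insert _ _) hmain
    exact hv (this ▸ Set.mem_insert v F)


end PrisonFreePaper
end

section
/- Let G=(V,E) be a prison-free graph and let e∈E be an edge that occurs in at least one induced K4 of G (a 4-vertex set inducing a complete graph and containing both endpoints of e). Then there is exactly one F ∈ cmd_4(G) such that both endpoints of e lie in F (equivalently, such that e is an edge of G[F]). -/
namespace PrisonFreePaper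

variable {V : Type*}

section Statement4Aux

variable {G : SimpleGraph V}

private lemma nsymm {G : SimpleGraph V} {p q : V} (h : ¬ G.Adj p q) : ¬ G.Adj q p :=
  fun h' => h h'.symm

/-- Nonadjacency is "transitive" on `F` (the relational form of complete multipartite). -/
def Trans' (G : SimpleGraph V) (F : Set V) : Prop :=
  ∀ p ∈ F, ∀ q ∈ F, ∀ r ∈ F, ¬ G.Adj p q → ¬ G.Adj q r → ¬ G.Adj p r

/-- `F` contains four pairwise adjacent vertices. -/
def Clique4 (G : SimpleGraph V) (F : Set V) : Prop :=
  ∃ k : Fin 4 → V, (∀ i, k i ∈ F) ∧ ∀ i j, i ≠ j → G.Adj (k i) (k j)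

lemma factA (hG : PrisonFree G) {a b c d x : V}
    (hab : G.Adj a b) (hac : G.Adj a c) (had : G.Adj a d)
    (hbc : G.Adj b c) (hbd : G.Adj b d) (hcd : G.Adj c d)
    (hxa : G.Adj x a) (hxb : G.Adj x b)
    (hxc : ¬ G.Adj x c) (hxd : ¬ G.Adj x d) (hxc' : x ≠ c) (hxd' : x ≠ d) : False := by
  have nab : a ≠ b := hab.ne
  have nac : a ≠ c := hac.ne
  have nad : a ≠ d := had.ne
  have nbc : b ≠ c := hbc.ne
  have nbd : b ≠ d := hbd.ne
  have ncd : c ≠ d := hcd.ne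
  have nxa : x ≠ a := hxa.ne
  have nxb : x ≠ b := hxb.ne
  have hba : G.Adj b a := hab.symm
  have hca : G.Adj c a := hac.symm
  have hda : G.Adj d a := had.symm
  have hcb : G.Adj c b := hbc.symm
  have hdb : G.Adj d b := hbd.symm
  have hdc : G.Adj d c := hcd.symm
  have hax : G.Adj a x := hxa.symm
  have hbx : G.Adj b x := hxb.symm
  have hcx : ¬ G.Adj c x := nsymm hxc
  have hdx : ¬ G.Adj d x := nsymm hxd
  have hirr : ∀ w : V, ¬ G.Adj w w := fun w => G.irrefl
  apply hG
  refine ⟨Set.range ⇑(⟨![a,b,c,d,x], ?_⟩ : Fin 5 ↪ V), ⟨_, rfl, ?_⟩⟩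
  · intro i j hij
    fin_cases i <;> fin_cases j <;> simp_all
  · intro i j
    change G.Adj (![a,b,c,d,x] i) (![a,b,c,d,x] j) ↔ prison.Adj i j
    fin_cases i <;> fin_cases j <;>
      simp_all [prison]

lemma badUnique (tr : Trans' G F) {k : Fin 4 → V} (hkF : ∀ i, k i ∈ F)
    (hk : ∀ i j, i ≠ j → G.Adj (k i) (k j)) {w : V} (hw : w ∈ F) {i j : Fin 4}
    (hi : ¬ G.Adj (k i) w) (hj : ¬ G.Adj (k j) w) : i = j := by
  by_contra hij
  exact tr (k i) (hkF i) w hw (k j) (hkF j) hi (nsymm hj) (hk i j hij)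

lemma pick1 {F : Set V} (tr : Trans' G F) {k : Fin 4 → V} (hkF : ∀ i, k i ∈ F)
    (hk : ∀ i j, i ≠ j → G.Adj (k i) (k j)) {w1 w2 w3 : V}
    (hw1 : w1 ∈ F) (hw2 : w2 ∈ F) (hw3 : w3 ∈ F) :
    ∃ i, G.Adj (k i) w1 ∧ G.Adj (k i) w2 ∧ G.Adj (k i) w3 := by
  classical
  set b : V → Fin 4 := fun w => if h : ∃ i, ¬ G.Adj (k i) w then h.choose else 0 with hbdef
  have hb : ∀ w, w ∈ F → ∀ i, ¬ G.Adj (k i) w → i = b w := by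
    intro w hw i hi
    have h : ∃ i, ¬ G.Adj (k i) w := ⟨i, hi⟩
    have : b w = h.choose := by simp [hbdef, dif_pos h]
    rw [this]
    exact badUnique tr hkF hk hw hi h.choose_spec
  have hex : ∀ a b c : Fin 4, ∃ i, i ≠ a ∧ i ≠ b ∧ i ≠ c := by decide
  obtain ⟨i, h1, h2, h3⟩ := hex (b w1) (b w2) (b w3)
  refine ⟨i, ?_, ?_, ?_⟩
  · by_contra h; exact h1 (hb w1 hw1 i h)
  · by_contra h; exact h2 (hb w2 hw2 i h)
  · by_contra h; exact h3 (hb w3 hw3 i h)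

lemma pick2 {F : Set V} (tr : Trans' G F) {k : Fin 4 → V} (hkF : ∀ i, k i ∈ F)
    (hk : ∀ i j, i ≠ j → G.Adj (k i) (k j)) {w1 w2 : V}
    (hw1 : w1 ∈ F) (hw2 : w2 ∈ F) :
    ∃ i j, i ≠ j ∧ G.Adj (k i) w1 ∧ G.Adj (k i) w2 ∧ G.Adj (k j) w1 ∧ G.Adj (k j) w2 := by
  classical
  set b : V → Fin 4 := fun w => if h : ∃ i, ¬ G.Adj (k i) w then h.choose else 0 with hbdef
  have hb : ∀ w, w ∈ F → ∀ i, ¬ G.Adj (k i) w → i = b w := by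
    intro w hw i hi
    have h : ∃ i, ¬ G.Adj (k i) w := ⟨i, hi⟩
    have : b w = h.choose := by simp [hbdef, dif_pos h]
    rw [this]
    exact badUnique tr hkF hk hw hi h.choose_spec
  have hex : ∀ a b : Fin 4, ∃ i j, i ≠ j ∧ i ≠ a ∧ i ≠ b ∧ j ≠ a ∧ j ≠ b := by decide
  obtain ⟨i, j, hij, h1, h2, h3, h4⟩ := hex (b w1) (b w2)
  refine ⟨i, j, hij, ?_, ?_, ?_, ?_⟩
  · by_contra h; exact h1 (hb w1 hw1 i h)
  · by_contra h; exact h2 (hb w2 hw2 i h)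
  · by_contra h; exact h3 (hb w1 hw1 j h)
  · by_contra h; exact h4 (hb w2 hw2 j h)

end Statement4Aux

section Statement4Aux2

variable {G : SimpleGraph V} {F : Set V}

lemma lemL_branch (hG : PrisonFree G) (tr : Trans' G F)
    {k : Fin 4 → V} (hkF : ∀ i, k i ∈ F) (hk : ∀ i j, i ≠ j → G.Adj (k i) (k j))
    {a b y z x : V} (ha : a ∈ F) (hb : b ∈ F) (hy : y ∈ F) (hz : z ∈ F) (hx : x ∉ F)
    (hab : G.Adj a b) (hyz : G.Adj y z) (hxa : G.Adj x a) (hxb : G.Adj x b)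
    (hxy : ¬ G.Adj x y) (hxz : ¬ G.Adj x z) (hay : ¬ G.Adj a y) : False := by
  have hxy' : x ≠ y := fun h => hx (h ▸ hy)
  have hxz' : x ≠ z := fun h => hx (h ▸ hz)
  have hby : G.Adj b y := by
    by_contra h
    exact tr b hb y hy a ha h (nsymm hay) hab.symm
  have haz : G.Adj a z := by
    by_contra h
    exact tr y hy a ha z hz (nsymm hay) h hyz
  by_cases hbz : G.Adj b z
  · obtain ⟨i, hia, hib, hiz⟩ := pick1 tr hkF hk ha hb hz
    have hiy : G.Adj (k i) y := by
      by_contra h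
      exact tr (k i) (hkF i) y hy a ha h (nsymm hay) hia
    by_cases hxk : G.Adj x (k i)
    · exact factA hG hib.symm hby hbz hiy hiz hyz hxb hxk hxy hxz hxy' hxz'
    · exact factA hG hab haz hia.symm hbz hib.symm hiz.symm hxa hxb hxz hxk hxz'
        (fun h => hx (h ▸ hkF i))
  · obtain ⟨i, j, hij, hia, hib, hja, hjb⟩ := pick2 tr hkF hk ha hb
    have hiy : G.Adj (k i) y := by
      by_contra h; exact tr (k i) (hkF i) y hy a ha h (nsymm hay) hia
    have hjy : G.Adj (k j) y := by
      by_contra h; exact tr (k j) (hkF j) y hy a ha h (nsymm hay) hja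
    have hiz : G.Adj (k i) z := by
      by_contra h; exact tr (k i) (hkF i) z hz b hb h (nsymm hbz) hib
    have hjz : G.Adj (k j) z := by
      by_contra h; exact tr (k j) (hkF j) z hz b hb h (nsymm hbz) hjb
    have hxi' : x ≠ k i := fun h => hx (h ▸ hkF i)
    have hxj' : x ≠ k j := fun h => hx (h ▸ hkF j)
    by_cases hxi : G.Adj x (k i) <;> by_cases hxj : G.Adj x (k j)
    · exact factA hG (hk i j hij) hiy hiz hjy hjz hyz hxi hxj hxy hxz hxy' hxz'
    · exact factA hG hib.symm hby hjb.symm hiy (hk i j hij) hjy.symm hxb hxi hxy hxj hxy' hxj'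
    · exact factA hG hjb.symm hby hib.symm hjy (hk j i hij.symm) hiy.symm hxb hxj hxy hxi hxy' hxi'
    · exact factA hG hab hia.symm hja.symm hib.symm hjb.symm (hk i j hij) hxa hxb hxi hxj hxi' hxj'

lemma lemL (hG : PrisonFree G) (tr : Trans' G F)
    {k : Fin 4 → V} (hkF : ∀ i, k i ∈ F) (hk : ∀ i j, i ≠ j → G.Adj (k i) (k j))
    {a b y z x : V} (ha : a ∈ F) (hb : b ∈ F) (hy : y ∈ F) (hz : z ∈ F) (hx : x ∉ F)
    (hab : G.Adj a b) (hyz : G.Adj y z) (hxa : G.Adj x a) (hxb : G.Adj x b)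
    (hxy : ¬ G.Adj x y) (hxz : ¬ G.Adj x z) : False := by
  by_cases hay : G.Adj a y
  · by_cases hby : G.Adj b y
    · by_cases haz : G.Adj a z
      · by_cases hbz : G.Adj b z
        · exact factA hG hab hay haz hby hbz hyz hxa hxb hxy hxz
            (fun h => hx (h ▸ hy)) (fun h => hx (h ▸ hz))
        · exact lemL_branch hG tr hkF hk hb ha hz hy hx hab.symm hyz.symm hxb hxa hxz hxy hbz
      · exact lemL_branch hG tr hkF hk ha hb hz hy hx hab hyz.symm hxa hxb hxz hxy haz
    · exact lemL_branch hG tr hkF hk hb ha hy hz hx hab.symm hyz hxb hxa hxy hxz hby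
  · exact lemL_branch hG tr hkF hk ha hb hy hz hx hab hyz hxa hxb hxy hxz hay

end Statement4Aux2

section Statement4Aux3

variable {G : SimpleGraph V} {Fa Fb : Set V} {u v : V}

lemma lemN_aux (hG : PrisonFree G) (tra : Trans' G Fa) (trb : Trans' G Fb)
    {ka : Fin 4 → V} (hkaF : ∀ i, ka i ∈ Fa) (hka : ∀ i j, i ≠ j → G.Adj (ka i) (ka j))
    {kb : Fin 4 → V} (hkbF : ∀ i, kb i ∈ Fb) (hkb : ∀ i j, i ≠ j → G.Adj (kb i) (kb j))
    (hu1 : u ∈ Fa) (hu2 : u ∈ Fb) (hv1 : v ∈ Fa) (hv2 : v ∈ Fb) (huv : G.Adj u v)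
    {x : V} (hxb : x ∈ Fb) (hxa : x ∉ Fa) (hxu : ¬ G.Adj x u) :
    ∃ n1 ∈ Fa, ∃ n2 ∈ Fa, G.Adj n1 n2 ∧ G.Adj x n1 ∧ G.Adj x n2 := by
  have hxv : G.Adj x v := by
    by_contra h
    exact trb u hu2 x hxb v hv2 (nsymm hxu) h huv
  obtain ⟨i, j, hij, hiu, hiv, hju, hjv⟩ := pick2 tra hkaF hka hu1 hv1
  by_cases hxc : G.Adj x (ka i)
  · exact ⟨v, hv1, ka i, hkaF i, hiv.symm, hxv, hxc⟩
  by_cases hxd : G.Adj x (ka j)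
  · exact ⟨v, hv1, ka j, hkaF j, hjv.symm, hxv, hxd⟩
  obtain ⟨l, hlu, hlv, hlx⟩ := pick1 trb hkbF hkb hu2 hv2 hxb
  exfalso
  rcases eq_or_ne (kb l) (ka i) with h | h
  · exact hxc (h ▸ hlx.symm)
  rcases eq_or_ne (kb l) (ka j) with h' | h'
  · exact hxd (h' ▸ hlx.symm)
  by_cases hyc' : G.Adj (kb l) (ka i)
  · -- prison on K4 {v, kb l, u, ka i} with fifth x
    exact factA hG hlv.symm huv.symm hiv.symm hlu hyc' hiu.symm
      hxv hlx.symm hxu hxc (fun hh => hxa (hh ▸ hu1)) (fun hh => hxa (hh ▸ hkaF i))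
  by_cases hyd' : G.Adj (kb l) (ka j)
  · -- prison on K4 {v, kb l, u, ka j} with fifth x
    exact factA hG hlv.symm huv.symm hjv.symm hlu hyd' hju.symm
      hxv hlx.symm hxu hxd (fun hh => hxa (hh ▸ hu1)) (fun hh => hxa (hh ▸ hkaF j))
  · -- prison on K4 {u, v, ka i, ka j} with fifth kb l
    exact factA hG huv hiu.symm hju.symm hiv.symm hjv.symm (hka i j hij)
      hlu hlv hyc' hyd' h h'

lemma lemN (hG : PrisonFree G) (tra : Trans' G Fa) (trb : Trans' G Fb)
    {ka : Fin 4 → V} (hkaF : ∀ i, ka i ∈ Fa) (hka : ∀ i j, i ≠ j → G.Adj (ka i) (ka j))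
    {kb : Fin 4 → V} (hkbF : ∀ i, kb i ∈ Fb) (hkb : ∀ i j, i ≠ j → G.Adj (kb i) (kb j))
    (hu1 : u ∈ Fa) (hu2 : u ∈ Fb) (hv1 : v ∈ Fa) (hv2 : v ∈ Fb) (huv : G.Adj u v)
    {x : V} (hxb : x ∈ Fb) (hxa : x ∉ Fa) :
    ∃ n1 ∈ Fa, ∃ n2 ∈ Fa, G.Adj n1 n2 ∧ G.Adj x n1 ∧ G.Adj x n2 := by
  by_cases hxu : G.Adj x u
  · by_cases hxv : G.Adj x v
    · exact ⟨u, hu1, v, hv1, huv, hxu, hxv⟩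
    · exact lemN_aux hG tra trb hkaF hka hkbF hkb hv1 hv2 hu1 hu2 huv.symm hxb hxa hxv
  · exact lemN_aux hG tra trb hkaF hka hkbF hkb hu1 hu2 hv1 hv2 huv hxb hxa hxu

lemma goodI (hG : PrisonFree G) (tra : Trans' G Fa) (trb : Trans' G Fb)
    {ka : Fin 4 → V} (hkaF : ∀ i, ka i ∈ Fa) (hka : ∀ i j, i ≠ j → G.Adj (ka i) (ka j))
    {kb : Fin 4 → V} (hkbF : ∀ i, kb i ∈ Fb) (hkb : ∀ i j, i ≠ j → G.Adj (kb i) (kb j))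
    (hu1 : u ∈ Fa) (hu2 : u ∈ Fb) (hv1 : v ∈ Fa) (hv2 : v ∈ Fb) (huv : G.Adj u v)
    {x : V} (hxb : x ∈ Fb) (hxa : x ∉ Fa) {p q : V} (hp : p ∈ Fa) (hq : q ∈ Fa)
    (hxp : ¬ G.Adj x p) (hxq : ¬ G.Adj x q) : ¬ G.Adj p q := by
  intro hpq
  obtain ⟨n1, hn1, n2, hn2, h12, hx1, hx2⟩ :=
    lemN hG tra trb hkaF hka hkbF hkb hu1 hu2 hv1 hv2 huv hxb hxa
  exact lemL hG tra hkaF hka hn1 hn2 hp hq hxa h12 hpq hx1 hx2 hxp hxq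

lemma goodII (hG : PrisonFree G) (tra : Trans' G Fa) (trb : Trans' G Fb)
    {ka : Fin 4 → V} (hkaF : ∀ i, ka i ∈ Fa) (hka : ∀ i j, i ≠ j → G.Adj (ka i) (ka j))
    {kb : Fin 4 → V} (hkbF : ∀ i, kb i ∈ Fb) (hkb : ∀ i j, i ≠ j → G.Adj (kb i) (kb j))
    (hu1 : u ∈ Fa) (hu2 : u ∈ Fb) (hv1 : v ∈ Fa) (hv2 : v ∈ Fb) (huv : G.Adj u v)
    {x : V} (hxb : x ∈ Fb) (hxa : x ∉ Fa) {p q : V} (hp : p ∈ Fa) (hq : q ∈ Fa)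
    (hxp : ¬ G.Adj x p) (hpq : ¬ G.Adj p q) : ¬ G.Adj x q := by
  intro hxq
  obtain ⟨i, j, hij, hip, -, hjp, -⟩ := pick2 tra hkaF hka hp hp
  have hiq : G.Adj (ka i) q := by
    by_contra h; exact tra (ka i) (hkaF i) q hq p hp h (nsymm hpq) hip
  have hjq : G.Adj (ka j) q := by
    by_contra h; exact tra (ka j) (hkaF j) q hq p hp h (nsymm hpq) hjp
  have hxi : G.Adj x (ka i) := by
    by_contra h
    exact goodI hG tra trb hkaF hka hkbF hkb hu1 hu2 hv1 hv2 huv hxb hxa hp (hkaF i)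
      hxp h hip.symm
  have hxj : G.Adj x (ka j) := by
    by_contra h
    exact goodI hG tra trb hkaF hka hkbF hkb hu1 hu2 hv1 hv2 huv hxb hxa hp (hkaF j)
      hxp h hjp.symm
  -- prison on K4 {ka i, ka j, q, x} with fifth p
  exact factA hG (hka i j hij) hiq hxi.symm hjq hxj.symm hxq.symm
    hip.symm hjp.symm hpq (nsymm hxp) (fun h => hxp (h ▸ hxq)) (fun h => hxa (h ▸ hp))

end Statement4Aux3

section Statement4Aux4

variable {G : SimpleGraph V}

lemma unionTrans (hG : PrisonFree G) {F1 F2 : Set V} {u v : V}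
    (tr1 : Trans' G F1) (tr2 : Trans' G F2) (hc1 : Clique4 G F1) (hc2 : Clique4 G F2)
    (hu1 : u ∈ F1) (hu2 : u ∈ F2) (hv1 : v ∈ F1) (hv2 : v ∈ F2) (huv : G.Adj u v) :
    Trans' G (F1 ∪ F2) := by
  obtain ⟨k1, hk1F, hk1⟩ := hc1
  obtain ⟨k2, hk2F, hk2⟩ := hc2
  have gI12 : ∀ x ∈ F2, x ∉ F1 → ∀ p ∈ F1, ∀ q ∈ F1,
      ¬ G.Adj x p → ¬ G.Adj x q → ¬ G.Adj p q := fun x hx hx' p hp q hq h1 h2 =>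
    goodI hG tr1 tr2 hk1F hk1 hk2F hk2 hu1 hu2 hv1 hv2 huv hx hx' hp hq h1 h2
  have gI21 : ∀ x ∈ F1, x ∉ F2 → ∀ p ∈ F2, ∀ q ∈ F2,
      ¬ G.Adj x p → ¬ G.Adj x q → ¬ G.Adj p q := fun x hx hx' p hp q hq h1 h2 =>
    goodI hG tr2 tr1 hk2F hk2 hk1F hk1 hu2 hu1 hv2 hv1 huv hx hx' hp hq h1 h2
  have gII12 : ∀ x ∈ F2, x ∉ F1 → ∀ p ∈ F1, ∀ q ∈ F1,
      ¬ G.Adj x p → ¬ G.Adj p q → ¬ G.Adj x q := fun x hx hx' p hp q hq h1 h2 =>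
    goodII hG tr1 tr2 hk1F hk1 hk2F hk2 hu1 hu2 hv1 hv2 huv hx hx' hp hq h1 h2
  have gII21 : ∀ x ∈ F1, x ∉ F2 → ∀ p ∈ F2, ∀ q ∈ F2,
      ¬ G.Adj x p → ¬ G.Adj p q → ¬ G.Adj x q := fun x hx hx' p hp q hq h1 h2 =>
    goodII hG tr2 tr1 hk2F hk2 hk1F hk1 hu2 hu1 hv2 hv1 huv hx hx' hp hq h1 h2
  intro p hp q hq r hr hpq hqr
  by_cases hp1 : p ∈ F1 <;> by_cases hq1 : q ∈ F1 <;> by_cases hr1 : r ∈ F1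
  · exact tr1 p hp1 q hq1 r hr1 hpq hqr
  · -- p,q ∈ F1, r ∈ F2\F1
    have hr2 : r ∈ F2 := hr.resolve_left hr1
    exact nsymm (gII12 r hr2 hr1 q hq1 p hp1 (nsymm hqr) (nsymm hpq))
  · -- p,r ∈ F1, q ∈ F2\F1
    have hq2 : q ∈ F2 := hq.resolve_left hq1
    exact gI12 q hq2 hq1 p hp1 r hr1 (nsymm hpq) hqr
  · -- p ∈ F1, q,r ∈ F2\F1
    have hq2 : q ∈ F2 := hq.resolve_left hq1
    have hr2 : r ∈ F2 := hr.resolve_left hr1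
    by_cases hp2 : p ∈ F2
    · exact tr2 p hp2 q hq2 r hr2 hpq hqr
    · exact gII21 p hp1 hp2 q hq2 r hr2 hpq hqr
  · -- p ∈ F2\F1, q,r ∈ F1
    have hp2 : p ∈ F2 := hp.resolve_left hp1
    exact gII12 p hp2 hp1 q hq1 r hr1 hpq hqr
  · -- p ∈ F2\F1, q ∈ F1, r ∈ F2\F1
    have hp2 : p ∈ F2 := hp.resolve_left hp1
    have hr2 : r ∈ F2 := hr.resolve_left hr1
    by_cases hq2 : q ∈ F2
    · exact tr2 p hp2 q hq2 r hr2 hpq hqr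
    · exact gI21 q hq1 hq2 p hp2 r hr2 (nsymm hpq) hqr
  · -- p,q ∈ F2\F1?, r ∈ F1 : p ∉ F1, q ∉ F1, r ∈ F1
    have hp2 : p ∈ F2 := hp.resolve_left hp1
    have hq2 : q ∈ F2 := hq.resolve_left hq1
    by_cases hr2 : r ∈ F2
    · exact tr2 p hp2 q hq2 r hr2 hpq hqr
    · exact nsymm (gII21 r hr1 hr2 q hq2 p hp2 (nsymm hqr) (nsymm hpq))
  · exact tr2 p (hp.resolve_left hp1) q (hq.resolve_left hq1) r (hr.resolve_left hr1) hpq hqr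

/-- The class of `w` in `F`: its non-neighbours in `F` (including itself). -/
def cls (G : SimpleGraph V) (F : Set V) (w : V) : Set V := {y | y ∈ F ∧ ¬ G.Adj w y}

lemma cmp4_of {F : Set V} (tr : Trans' G F) (hc : Clique4 G F) : CMPAtLeast G F 4 := by
  classical
  obtain ⟨k, hkF, hk⟩ := hc
  refine ⟨cls G F '' F, ⟨?_, ?_, ?_, ?_⟩, ⟨fun i => cls G F (k i), ?_⟩, fun i => ⟨k i, hkF i, rfl⟩⟩
  · rintro C ⟨w, hw, rfl⟩
    exact ⟨⟨w, hw, G.irrefl⟩, fun y hy => hy.1⟩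
  · apply Set.Subset.antisymm
    · rintro y ⟨C, ⟨w, hw, rfl⟩, hy⟩
      exact hy.1
    · intro y hy
      exact ⟨cls G F y, ⟨y, hy, rfl⟩, hy, G.irrefl⟩
  · rintro C ⟨w, hw, rfl⟩ D ⟨w', hw', rfl⟩ hne
    rw [Set.disjoint_left]
    intro y hy hy'
    apply hne
    have hww' : ¬ G.Adj w w' := tr w hw y hy.1 w' hw' hy.2 (nsymm hy'.2)
    ext z
    constructor
    · intro hz
      exact ⟨hz.1, tr w' hw' w hw z hz.1 (nsymm hww') hz.2⟩
    · intro hz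
      exact ⟨hz.1, tr w hw w' hw' z hz.1 hww' hz.2⟩
  · intro a ha b hb
    constructor
    · rintro hadj ⟨C, ⟨w, hw, rfl⟩, h1, h2⟩
      exact tr a ha w hw b hb (nsymm h1.2) h2.2 hadj
    · intro h
      by_contra hadj
      exact h ⟨cls G F a, ⟨a, ha, rfl⟩, ⟨ha, G.irrefl⟩, ⟨hb, hadj⟩⟩
  · intro i j hij
    have hij' : cls G F (k i) = cls G F (k j) := hij
    have : k j ∈ cls G F (k j) := ⟨hkF j, G.irrefl⟩
    rw [← hij'] at this
    by_contra hne
    exact this.2 (hk i j hne)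

lemma cmp4_to {F : Set V} (h : CMPAtLeast G F 4) : Trans' G F ∧ Clique4 G F := by
  classical
  obtain ⟨P, ⟨hne, hUn, hdisj, hiff⟩, f, hf⟩ := h
  have getC : ∀ p ∈ F, ∀ q ∈ F, ¬ G.Adj p q → ∃ C ∈ P, p ∈ C ∧ q ∈ C := by
    intro p hp q hq hpq
    by_contra h
    exact hpq ((hiff p hp q hq).mpr h)
  constructor
  · intro p hp q hq r hr hpq hqr
    obtain ⟨C, hC, hpC, hqC⟩ := getC p hp q hq hpq
    obtain ⟨D, hD, hqD, hrD⟩ := getC q hq r hr hqr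
    have hCD : C = D := by
      by_contra hne'
      exact (Set.disjoint_left.mp (hdisj C hC D hD hne')) hqC hqD
    intro hadj
    exact (hiff p hp r hr).mp hadj ⟨C, hC, hpC, hCD ▸ hrD⟩
  · refine ⟨fun i => ((hne (f i) (hf i)).1).some, fun i => (hne (f i) (hf i)).2 ((hne (f i) (hf i)).1).some_mem, ?_⟩
    intro i j hij
    set c : Fin 4 → V := fun i => ((hne (f i) (hf i)).1).some with hcdef
    have hcmem : ∀ i, c i ∈ f i := fun i => ((hne (f i) (hf i)).1).some_mem
    have hcF : ∀ i, c i ∈ F := fun i => (hne (f i) (hf i)).2 (hcmem i)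
    have := (hiff (c i) (hcF i) (c j) (hcF j))
    rw [this]
    rintro ⟨C, hC, h1, h2⟩
    have e1 : C = f i := by
      by_contra hne'
      exact (Set.disjoint_left.mp (hdisj C hC (f i) (hf i) hne')) h1 (hcmem i)
    have e2 : C = f j := by
      by_contra hne'
      exact (Set.disjoint_left.mp (hdisj C hC (f j) (hf j) hne')) h2 (hcmem j)
    exact hij (f.injective (e1 ▸ e2))

end Statement4Aux4

section Statement4Aux5

variable {G : SimpleGraph V}

lemma exists_max [Fintype V] (G : SimpleGraph V) (K : Set V) (hK : CMPAtLeast G K 4) :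
    ∃ F, K ⊆ F ∧ Cmd G Set.univ 4 F := by
  classical
  have hT : {F : Set V | K ⊆ F ∧ CMPAtLeast G F 4}.Finite := Set.toFinite _
  obtain ⟨F, hF, hmax⟩ :=
    Set.Finite.exists_maximalFor id _ hT ⟨K, Set.Subset.rfl, hK⟩
  refine ⟨F, hF.1, Set.subset_univ F, hF.2, fun F' _ hFF' hcm => ?_⟩
  exact Set.Subset.antisymm (hmax ⟨hF.1.trans hFF', hcm⟩ hFF') hFF'

lemma cmd_eq (hG : PrisonFree G) {u v : V} (huv : G.Adj u v) {F1 F2 : Set V}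
    (h1 : Cmd G Set.univ 4 F1) (h2 : Cmd G Set.univ 4 F2)
    (hu1 : u ∈ F1) (hv1 : v ∈ F1) (hu2 : u ∈ F2) (hv2 : v ∈ F2) : F1 = F2 := by
  obtain ⟨tr1, hc1⟩ := cmp4_to h1.2.1
  obtain ⟨tr2, hc2⟩ := cmp4_to h2.2.1
  have htr : Trans' G (F1 ∪ F2) := unionTrans hG tr1 tr2 hc1 hc2 hu1 hu2 hv1 hv2 huv
  have hcl : Clique4 G (F1 ∪ F2) := by
    obtain ⟨k, hkF, hk⟩ := hc1
    exact ⟨k, fun i => Or.inl (hkF i), hk⟩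
  have hcm := cmp4_of htr hcl
  have e1 := h1.2.2 (F1 ∪ F2) (Set.subset_univ _) Set.subset_union_left hcm
  have e2 := h2.2.2 (F1 ∪ F2) (Set.subset_univ _) Set.subset_union_right hcm
  exact e1.symm.trans e2

end Statement4Aux5


/-- In a prison-free graph `G`, every edge `uv` occurring in some
induced `K₄` lies in a unique `F ∈ cmd₄(G)`. -/
theorem cmd4_unique_for_K4_edge {V : Type*} [Fintype V] (G : SimpleGraph V)
    (hG : PrisonFree G) (u v : V) (huv : G.Adj u v)
    (hK : ∃ K : Set V, IsK4 G K ∧ u ∈ K ∧ v ∈ K) :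
    ∃! F : Set V, Cmd G Set.univ 4 F ∧ u ∈ F ∧ v ∈ F := by
  classical
  obtain ⟨K, ⟨hKcard, hKadj⟩, huK, hvK⟩ := hK
  have hfin : K.Finite := Set.toFinite K
  have hne : K.Nonempty := by
    rw [← Set.ncard_pos hfin]
    omega
  obtain ⟨a, ha⟩ := hne
  have h3 : (K \ {a}).ncard = 3 := by
    have := Set.ncard_diff_singleton_add_one ha hfin
    omega
  obtain ⟨b, c, d, hbc, hbd, hcd, hEq⟩ := Set.ncard_eq_three.mp h3
  have hb : b ∈ K ∧ b ≠ a := by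
    have : b ∈ K \ {a} := by rw [hEq]; simp
    exact ⟨this.1, this.2⟩
  have hc : c ∈ K ∧ c ≠ a := by
    have : c ∈ K \ {a} := by rw [hEq]; simp
    exact ⟨this.1, this.2⟩
  have hd : d ∈ K ∧ d ≠ a := by
    have : d ∈ K \ {a} := by rw [hEq]; simp
    exact ⟨this.1, this.2⟩
  have htr : Trans' G K := by
    intro p hp q hq r hr hpq hqr
    by_cases hpq' : p = q
    · exact hpq' ▸ hqr
    · exact absurd (hKadj p hp q hq hpq') hpq
  have hcl : Clique4 G K := by
    refine ⟨![a, b, c, d], ?_, ?_⟩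
    · intro i
      fin_cases i <;> simp [ha, hb.1, hc.1, hd.1]
    · intro i j hij
      have gab : G.Adj a b := hKadj a ha b hb.1 (Ne.symm hb.2)
      have gac : G.Adj a c := hKadj a ha c hc.1 (Ne.symm hc.2)
      have gad : G.Adj a d := hKadj a ha d hd.1 (Ne.symm hd.2)
      have gbc : G.Adj b c := hKadj b hb.1 c hc.1 hbc
      have gbd : G.Adj b d := hKadj b hb.1 d hd.1 hbd
      have gcd : G.Adj c d := hKadj c hc.1 d hd.1 hcd
      have gba := gab.symm; have gca := gac.symm; have gda := gad.symm
      have gcb := gbc.symm; have gdb := gbd.symm; have gdc := gcd.symm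
      fin_cases i <;> fin_cases j <;> simp_all
  obtain ⟨F, hKF, hF⟩ := exists_max G K (cmp4_of htr hcl)
  refine ⟨F, ⟨hF, hKF huK, hKF hvK⟩, ?_⟩
  rintro F' ⟨hF', hu', hv'⟩
  exact cmd_eq hG huv hF' hF hu' hv' (hKF huK) (hKF hvK)

end PrisonFreePaper
end

section
/- Let G be a graph, k∈ℕ with k≥1, and let u,v be distinct vertices of G with uv∉E(G). Then there exists a graph G' on vertex set V(G)∪W, where W is a set of 3(k+1) new vertices disjoint from V(G), such that the induced subgraph of G' on V(G) equals G, and: (1) the minimal solutions to (G',k) are exactly the minimal solutions A to (G,k) satisfying uv∉A, and (2) every solution A to (G',k) satisfies uv∉A. Here a solution to an instance (H,k) is a prison-free completion set for H of size at most k, and a solution is minimal if no proper subset of it is a prison-free completion set for H. -/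
namespace PrisonFreePaper

variable {V : Type*}

/-! ### auxiliary development -/

section Aux

variable {X : Type*}

/-- A prison cannot pass through a "pendant-pair" vertex `w` whose neighbours are all
either `U`, `W`, or a partner vertex whose neighbours are in turn only `U`, `W`, `w`,
provided `U` and `W` are non-adjacent. -/
lemma no_prison_through (H : SimpleGraph X) (U W w : X) (hUV : ¬ H.Adj U W)
    (hw : ∀ x, H.Adj w x → x = U ∨ x = W ∨ (∀ y, H.Adj x y → y = U ∨ y = W ∨ y = w)) :
    ∀ P, InducesPrison H P → w ∉ P := by
  rintro P ⟨f, hrange, hadj⟩ hwP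
  rw [← hrange] at hwP
  obtain ⟨t, ht⟩ := hwP
  -- two distinct adjacent vertices cannot both lie in {U, W}
  have hUV2 : ∀ x y : X, H.Adj x y → (x = U ∨ x = W) → (y = U ∨ y = W) → False := by
    rintro x y hxy (rfl | rfl) (rfl | rfl)
    · exact H.loopless.irrefl _ hxy
    · exact hUV hxy
    · exact hUV hxy.symm
    · exact H.loopless.irrefl _ hxy
  have finj : ∀ i j : Fin 5, i ≠ j → f i ≠ f j := fun i j hij h => hij (f.injective h)
  have hA : ∀ i j : Fin 5, i ≠ j → ¬((i = 4 ∧ (j = 2 ∨ j = 3)) ∨ (j = 4 ∧ (i = 2 ∨ i = 3))) → H.Adj (f i) (f j) :=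
    fun i j h1 h2 => (hadj i j).mpr ⟨h1, h2⟩
  fin_cases t
  -- in each case `f t = w`
  · -- t = 0 : neighbours 1 2 3 4
    have h1 := hw (f 1) (ht ▸ hA 0 1 (by decide) (by decide))
    rcases h1 with h1 | h1 | hp
    · rcases hw (f 2) (ht ▸ hA 0 2 (by decide) (by decide)) with h2 | h2 | hp2
      · exact hUV2 _ _ (hA 1 2 (by decide) (by decide)) (Or.inl h1) (Or.inl h2)
      · exact hUV2 _ _ (hA 1 2 (by decide) (by decide)) (Or.inl h1) (Or.inr h2)
      · rcases hp2 (f 3) (hA 2 3 (by decide) (by decide)) with h3 | h3 | h3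
        · exact hUV2 _ _ (hA 1 3 (by decide) (by decide)) (Or.inl h1) (Or.inl h3)
        · exact hUV2 _ _ (hA 1 3 (by decide) (by decide)) (Or.inl h1) (Or.inr h3)
        · exact finj 3 0 (by decide) (h3.trans ht.symm)
    · rcases hw (f 2) (ht ▸ hA 0 2 (by decide) (by decide)) with h2 | h2 | hp2
      · exact hUV2 _ _ (hA 1 2 (by decide) (by decide)) (Or.inr h1) (Or.inl h2)
      · exact hUV2 _ _ (hA 1 2 (by decide) (by decide)) (Or.inr h1) (Or.inr h2)
      · rcases hp2 (f 3) (hA 2 3 (by decide) (by decide)) with h3 | h3 | h3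
        · exact hUV2 _ _ (hA 1 3 (by decide) (by decide)) (Or.inr h1) (Or.inl h3)
        · exact hUV2 _ _ (hA 1 3 (by decide) (by decide)) (Or.inr h1) (Or.inr h3)
        · exact finj 3 0 (by decide) (h3.trans ht.symm)
    · -- f 1 is a partner: f2 f3 f4 all in {U, W}
      have h2 := hp (f 2) (hA 1 2 (by decide) (by decide))
      have h3 := hp (f 3) (hA 1 3 (by decide) (by decide))
      have h4 := hp (f 4) (hA 1 4 (by decide) (by decide))
      rw [← ht] at h2 h3 h4
      rcases h2 with h2 | h2 | h2
      · rcases h3 with h3 | h3 | h3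
        · exact finj 2 3 (by decide) (h2.trans h3.symm)
        · rcases h4 with h4 | h4 | h4
          · exact finj 2 4 (by decide) (h2.trans h4.symm)
          · exact finj 3 4 (by decide) (h3.trans h4.symm)
          · exact finj 4 0 (by decide) h4
        · exact finj 3 0 (by decide) h3
      · rcases h3 with h3 | h3 | h3
        · rcases h4 with h4 | h4 | h4
          · exact finj 3 4 (by decide) (h3.trans h4.symm)
          · exact finj 2 4 (by decide) (h2.trans h4.symm)
          · exact finj 4 0 (by decide) h4
        · exact finj 2 3 (by decide) (h2.trans h3.symm)
        · exact finj 3 0 (by decide) h3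
      · exact finj 2 0 (by decide) h2
  · -- t = 1 : neighbours 0 2 3 4, hub 0
    have h1 := hw (f 0) (ht ▸ hA 1 0 (by decide) (by decide))
    rcases h1 with h1 | h1 | hp
    · rcases hw (f 2) (ht ▸ hA 1 2 (by decide) (by decide)) with h2 | h2 | hp2
      · exact hUV2 _ _ (hA 0 2 (by decide) (by decide)) (Or.inl h1) (Or.inl h2)
      · exact hUV2 _ _ (hA 0 2 (by decide) (by decide)) (Or.inl h1) (Or.inr h2)
      · rcases hp2 (f 3) (hA 2 3 (by decide) (by decide)) with h3 | h3 | h3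
        · exact hUV2 _ _ (hA 0 3 (by decide) (by decide)) (Or.inl h1) (Or.inl h3)
        · exact hUV2 _ _ (hA 0 3 (by decide) (by decide)) (Or.inl h1) (Or.inr h3)
        · exact finj 3 1 (by decide) (h3.trans ht.symm)
    · rcases hw (f 2) (ht ▸ hA 1 2 (by decide) (by decide)) with h2 | h2 | hp2
      · exact hUV2 _ _ (hA 0 2 (by decide) (by decide)) (Or.inr h1) (Or.inl h2)
      · exact hUV2 _ _ (hA 0 2 (by decide) (by decide)) (Or.inr h1) (Or.inr h2)
      · rcases hp2 (f 3) (hA 2 3 (by decide) (by decide)) with h3 | h3 | h3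
        · exact hUV2 _ _ (hA 0 3 (by decide) (by decide)) (Or.inr h1) (Or.inl h3)
        · exact hUV2 _ _ (hA 0 3 (by decide) (by decide)) (Or.inr h1) (Or.inr h3)
        · exact finj 3 1 (by decide) (h3.trans ht.symm)
    · have h2 := hp (f 2) (hA 0 2 (by decide) (by decide))
      have h3 := hp (f 3) (hA 0 3 (by decide) (by decide))
      have h4 := hp (f 4) (hA 0 4 (by decide) (by decide))
      rw [← ht] at h2 h3 h4
      rcases h2 with h2 | h2 | h2
      · rcases h3 with h3 | h3 | h3
        · exact finj 2 3 (by decide) (h2.trans h3.symm)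
        · rcases h4 with h4 | h4 | h4
          · exact finj 2 4 (by decide) (h2.trans h4.symm)
          · exact finj 3 4 (by decide) (h3.trans h4.symm)
          · exact finj 4 1 (by decide) h4
        · exact finj 3 1 (by decide) h3
      · rcases h3 with h3 | h3 | h3
        · rcases h4 with h4 | h4 | h4
          · exact finj 3 4 (by decide) (h3.trans h4.symm)
          · exact finj 2 4 (by decide) (h2.trans h4.symm)
          · exact finj 4 1 (by decide) h4
        · exact finj 2 3 (by decide) (h2.trans h3.symm)
        · exact finj 3 1 (by decide) h3
      · exact finj 2 1 (by decide) h2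
  · -- t = 2 : neighbours 0 1 3, pairwise adjacent
    rcases hw (f 0) (ht ▸ hA 2 0 (by decide) (by decide)) with h0 | h0 | hp
    · rcases hw (f 1) (ht ▸ hA 2 1 (by decide) (by decide)) with h1 | h1 | hp1
      · exact hUV2 _ _ (hA 0 1 (by decide) (by decide)) (Or.inl h0) (Or.inl h1)
      · exact hUV2 _ _ (hA 0 1 (by decide) (by decide)) (Or.inl h0) (Or.inr h1)
      · rcases hp1 (f 3) (hA 1 3 (by decide) (by decide)) with h3 | h3 | h3
        · exact hUV2 _ _ (hA 0 3 (by decide) (by decide)) (Or.inl h0) (Or.inl h3)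
        · exact hUV2 _ _ (hA 0 3 (by decide) (by decide)) (Or.inl h0) (Or.inr h3)
        · exact finj 3 2 (by decide) (h3.trans ht.symm)
    · rcases hw (f 1) (ht ▸ hA 2 1 (by decide) (by decide)) with h1 | h1 | hp1
      · exact hUV2 _ _ (hA 0 1 (by decide) (by decide)) (Or.inr h0) (Or.inl h1)
      · exact hUV2 _ _ (hA 0 1 (by decide) (by decide)) (Or.inr h0) (Or.inr h1)
      · rcases hp1 (f 3) (hA 1 3 (by decide) (by decide)) with h3 | h3 | h3
        · exact hUV2 _ _ (hA 0 3 (by decide) (by decide)) (Or.inr h0) (Or.inl h3)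
        · exact hUV2 _ _ (hA 0 3 (by decide) (by decide)) (Or.inr h0) (Or.inr h3)
        · exact finj 3 2 (by decide) (h3.trans ht.symm)
    · have h1 := hp (f 1) (hA 0 1 (by decide) (by decide))
      have h3 := hp (f 3) (hA 0 3 (by decide) (by decide))
      rw [← ht] at h1 h3
      rcases h1 with h1 | h1 | h1
      · rcases h3 with h3 | h3 | h3
        · exact finj 1 3 (by decide) (h1.trans h3.symm)
        · exact hUV2 _ _ (hA 1 3 (by decide) (by decide)) (Or.inl h1) (Or.inr h3)
        · exact finj 3 2 (by decide) h3
      · rcases h3 with h3 | h3 | h3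
        · exact hUV2 _ _ (hA 1 3 (by decide) (by decide)) (Or.inr h1) (Or.inl h3)
        · exact finj 1 3 (by decide) (h1.trans h3.symm)
        · exact finj 3 2 (by decide) h3
      · exact finj 1 2 (by decide) h1
  · -- t = 3 : neighbours 0 1 2, pairwise adjacent
    rcases hw (f 0) (ht ▸ hA 3 0 (by decide) (by decide)) with h0 | h0 | hp
    · rcases hw (f 1) (ht ▸ hA 3 1 (by decide) (by decide)) with h1 | h1 | hp1
      · exact hUV2 _ _ (hA 0 1 (by decide) (by decide)) (Or.inl h0) (Or.inl h1)
      · exact hUV2 _ _ (hA 0 1 (by decide) (by decide)) (Or.inl h0) (Or.inr h1)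
      · rcases hp1 (f 2) (hA 1 2 (by decide) (by decide)) with h2 | h2 | h2
        · exact hUV2 _ _ (hA 0 2 (by decide) (by decide)) (Or.inl h0) (Or.inl h2)
        · exact hUV2 _ _ (hA 0 2 (by decide) (by decide)) (Or.inl h0) (Or.inr h2)
        · exact finj 2 3 (by decide) (h2.trans ht.symm)
    · rcases hw (f 1) (ht ▸ hA 3 1 (by decide) (by decide)) with h1 | h1 | hp1
      · exact hUV2 _ _ (hA 0 1 (by decide) (by decide)) (Or.inr h0) (Or.inl h1)
      · exact hUV2 _ _ (hA 0 1 (by decide) (by decide)) (Or.inr h0) (Or.inr h1)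
      · rcases hp1 (f 2) (hA 1 2 (by decide) (by decide)) with h2 | h2 | h2
        · exact hUV2 _ _ (hA 0 2 (by decide) (by decide)) (Or.inr h0) (Or.inl h2)
        · exact hUV2 _ _ (hA 0 2 (by decide) (by decide)) (Or.inr h0) (Or.inr h2)
        · exact finj 2 3 (by decide) (h2.trans ht.symm)
    · have h1 := hp (f 1) (hA 0 1 (by decide) (by decide))
      have h2 := hp (f 2) (hA 0 2 (by decide) (by decide))
      rw [← ht] at h1 h2
      rcases h1 with h1 | h1 | h1
      · rcases h2 with h2 | h2 | h2
        · exact finj 1 2 (by decide) (h1.trans h2.symm)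
        · exact hUV2 _ _ (hA 1 2 (by decide) (by decide)) (Or.inl h1) (Or.inr h2)
        · exact finj 2 3 (by decide) h2
      · rcases h2 with h2 | h2 | h2
        · exact hUV2 _ _ (hA 1 2 (by decide) (by decide)) (Or.inr h1) (Or.inl h2)
        · exact finj 1 2 (by decide) (h1.trans h2.symm)
        · exact finj 2 3 (by decide) h2
      · exact finj 1 3 (by decide) h1
  · -- t = 4 : neighbours 0 1
    rcases hw (f 0) (ht ▸ hA 4 0 (by decide) (by decide)) with h0 | h0 | hp
    · rcases hw (f 1) (ht ▸ hA 4 1 (by decide) (by decide)) with h1 | h1 | hp1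
      · exact hUV2 _ _ (hA 0 1 (by decide) (by decide)) (Or.inl h0) (Or.inl h1)
      · exact hUV2 _ _ (hA 0 1 (by decide) (by decide)) (Or.inl h0) (Or.inr h1)
      · rcases hp1 (f 2) (hA 1 2 (by decide) (by decide)) with h2 | h2 | h2
        · exact hUV2 _ _ (hA 0 2 (by decide) (by decide)) (Or.inl h0) (Or.inl h2)
        · exact hUV2 _ _ (hA 0 2 (by decide) (by decide)) (Or.inl h0) (Or.inr h2)
        · exact finj 2 4 (by decide) (h2.trans ht.symm)
    · rcases hw (f 1) (ht ▸ hA 4 1 (by decide) (by decide)) with h1 | h1 | hp1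
      · exact hUV2 _ _ (hA 0 1 (by decide) (by decide)) (Or.inr h0) (Or.inl h1)
      · exact hUV2 _ _ (hA 0 1 (by decide) (by decide)) (Or.inr h0) (Or.inr h1)
      · rcases hp1 (f 2) (hA 1 2 (by decide) (by decide)) with h2 | h2 | h2
        · exact hUV2 _ _ (hA 0 2 (by decide) (by decide)) (Or.inr h0) (Or.inl h2)
        · exact hUV2 _ _ (hA 0 2 (by decide) (by decide)) (Or.inr h0) (Or.inr h2)
        · exact finj 2 4 (by decide) (h2.trans ht.symm)
    · have h1 := hp (f 1) (hA 0 1 (by decide) (by decide))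
      have h2 := hp (f 2) (hA 0 2 (by decide) (by decide))
      rw [← ht] at h1 h2
      rcases h1 with h1 | h1 | h1
      · rcases h2 with h2 | h2 | h2
        · exact finj 1 2 (by decide) (h1.trans h2.symm)
        · exact hUV2 _ _ (hA 1 2 (by decide) (by decide)) (Or.inl h1) (Or.inr h2)
        · exact finj 2 4 (by decide) h2
      · rcases h2 with h2 | h2 | h2
        · exact hUV2 _ _ (hA 1 2 (by decide) (by decide)) (Or.inr h1) (Or.inl h2)
        · exact finj 1 2 (by decide) (h1.trans h2.symm)
        · exact finj 2 4 (by decide) h2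
      · exact finj 1 4 (by decide) h1

end Aux

section Gadget

variable {V : Type*}

open Sum in
/-- The forbidden-edge gadget graph. -/
def gadgetGraph (G : SimpleGraph V) (n : ℕ) (u v : V) : SimpleGraph (V ⊕ Fin n) where
  Adj x y :=
    match x, y with
    | inl a, inl b => G.Adj a b
    | inl a, inr _ => a = u ∨ a = v
    | inr _, inl a => a = u ∨ a = v
    | inr j, inr j' => (j : ℕ) / 3 = (j' : ℕ) / 3 ∧ (j : ℕ) % 3 + (j' : ℕ) % 3 = 1
  symm := by
    constructor
    rintro (a | j) (b | j') h
    · exact h.symm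
    · exact h
    · exact h
    · exact ⟨h.1.symm, by omega⟩
  loopless := by
    constructor
    rintro (a | j) h
    · exact G.loopless.irrefl a h
    · omega

variable {G : SimpleGraph V} {n : ℕ} {u v : V}

lemma gadget_adj_inl_inl (a b : V) :
    (gadgetGraph G n u v).Adj (Sum.inl a) (Sum.inl b) ↔ G.Adj a b := Iff.rfl

lemma gadget_adj_inl_inr (a : V) (j : Fin n) :
    (gadgetGraph G n u v).Adj (Sum.inl a) (Sum.inr j) ↔ (a = u ∨ a = v) := Iff.rfl

lemma gadget_adj_inr_inl (a : V) (j : Fin n) :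
    (gadgetGraph G n u v).Adj (Sum.inr j) (Sum.inl a) ↔ (a = u ∨ a = v) := Iff.rfl

lemma gadget_adj_inr_inr (j j' : Fin n) :
    (gadgetGraph G n u v).Adj (Sum.inr j) (Sum.inr j') ↔
      ((j : ℕ) / 3 = (j' : ℕ) / 3 ∧ (j : ℕ) % 3 + (j' : ℕ) % 3 = 1) := Iff.rfl

/-- Pairs in the image of `Sym2.map Sum.inl`. -/
def InlPairs (A : Set (Sym2 (V ⊕ Fin n))) : Prop :=
  ∀ e ∈ A, ∃ a b : V, e = s(Sum.inl a, Sum.inl b)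

lemma addEdges_adj (H : SimpleGraph V) (A : Set (Sym2 V)) (x y : V) :
    (addEdges H A).Adj x y ↔ H.Adj x y ∨ (s(x, y) ∈ A ∧ x ≠ y) := by
  simp [addEdges, SimpleGraph.fromEdgeSet_adj]

/-- If all added pairs are inl-inl, an added graph's adjacency at a gadget
vertex is the gadget adjacency. -/
lemma addEdges_gadget_adj {A : Set (Sym2 (V ⊕ Fin n))} (hA : InlPairs A) (j : Fin n)
    (x : V ⊕ Fin n) :
    (addEdges (gadgetGraph G n u v) A).Adj (Sum.inr j) x ↔
      (gadgetGraph G n u v).Adj (Sum.inr j) x := by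
  rw [addEdges_adj]
  constructor
  · rintro (h | ⟨hmem, _⟩)
    · exact h
    · obtain ⟨a, b, hab⟩ := hA _ hmem
      rw [Sym2.eq_iff] at hab
      rcases hab with ⟨h1, _⟩ | ⟨h1, _⟩ <;> exact absurd h1 (by simp)
  · exact Or.inl

/-- No prison in `gadgetGraph + (inl pairs)` contains a gadget vertex,
provided `u` and `v` remain non-adjacent. -/
lemma gadget_no_prison {A : Set (Sym2 (V ⊕ Fin n))} (hA : InlPairs A)
    (huv : ¬ (addEdges (gadgetGraph G n u v) A).Adj (Sum.inl u) (Sum.inl v))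
    {P : Set (V ⊕ Fin n)} (hP : InducesPrison (addEdges (gadgetGraph G n u v) A) P)
    (j : Fin n) : Sum.inr j ∉ P := by
  refine no_prison_through _ (Sum.inl u) (Sum.inl v) (Sum.inr j) huv ?_ P hP
  intro x hx
  rw [addEdges_gadget_adj hA] at hx
  match x with
  | Sum.inl a =>
    rcases (gadget_adj_inr_inl a j).mp hx with rfl | rfl
    · exact Or.inl rfl
    · exact Or.inr (Or.inl rfl)
  | Sum.inr j' =>
    refine Or.inr (Or.inr ?_)
    intro y hy
    rw [addEdges_gadget_adj hA] at hy
    match y with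
    | Sum.inl b =>
      rcases (gadget_adj_inr_inl b j').mp hy with rfl | rfl
      · exact Or.inl rfl
      · exact Or.inr (Or.inl rfl)
    | Sum.inr j'' =>
      refine Or.inr (Or.inr ?_)
      rw [gadget_adj_inr_inr] at hx hy
      have : (j : ℕ) = (j'' : ℕ) := by omega
      simp [Sum.inr.injEq, Fin.ext_iff, this]

/-- Prisons transfer along agreement on the set. -/
lemma prison_congr {X : Type*} {H K : SimpleGraph X} {P : Set X}
    (h : ∀ x ∈ P, ∀ y ∈ P, (H.Adj x y ↔ K.Adj x y)) :
    InducesPrison H P → InducesPrison K P := by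
  rintro ⟨f, hrange, hadj⟩
  refine ⟨f, hrange, fun a b => ?_⟩
  rw [← h (f a) (hrange ▸ Set.mem_range_self a) (f b) (hrange ▸ Set.mem_range_self b)]
  exact hadj a b

lemma prison_lift {K : SimpleGraph V} {H : SimpleGraph (V ⊕ Fin n)}
    (h : ∀ a b, H.Adj (Sum.inl a) (Sum.inl b) ↔ K.Adj a b) {Q : Set V}
    (hQ : InducesPrison K Q) : InducesPrison H (Sum.inl '' Q) := by
  obtain ⟨f, hrange, hadj⟩ := hQ
  refine ⟨f.trans ⟨Sum.inl, Sum.inl_injective⟩, ?_, fun a b => ?_⟩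
  · rw [← hrange, ← Set.range_comp]; rfl
  · exact (h _ _).trans (hadj a b)

lemma prison_restrict {K : SimpleGraph V} {H : SimpleGraph (V ⊕ Fin n)}
    (h : ∀ a b, H.Adj (Sum.inl a) (Sum.inl b) ↔ K.Adj a b) {P : Set (V ⊕ Fin n)}
    (hP : InducesPrison H P) (hsub : P ⊆ Set.range Sum.inl) :
    ∃ Q : Set V, InducesPrison K Q := by
  obtain ⟨f, hrange, hadj⟩ := hP
  have : ∀ i, ∃ a : V, Sum.inl a = f i := fun i =>
    hsub (hrange ▸ Set.mem_range_self i)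
  choose g hg using this
  have hginj : Function.Injective g := fun i j hij => f.injective (by rw [← hg, ← hg, hij])
  refine ⟨Set.range g, ⟨⟨g, hginj⟩, rfl, fun a b => ?_⟩⟩
  rw [← h, Function.Embedding.coeFn_mk, hg, hg]
  exact hadj a b

end Gadget

section Transfer

variable {V : Type*} {G : SimpleGraph V} {n : ℕ} {u v : V}

lemma sym2_rep {X : Type*} (z : Sym2 X) : ∃ x y, z = s(x, y) := by
  induction z using Sym2.ind with | _ x y => exact ⟨x, y, rfl⟩

lemma map_inl_inlPairs (A : Set (Sym2 V)) : InlPairs (Sym2.map (Sum.inl : V → V ⊕ Fin n) '' A) := by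
  rintro e ⟨e₀, _, rfl⟩
  obtain ⟨x, y, rfl⟩ := sym2_rep e₀
  exact ⟨x, y, by simp⟩

lemma mem_map_inl_iff (A : Set (Sym2 V)) (a b : V) :
    s(Sum.inl a, Sum.inl b) ∈ Sym2.map (Sum.inl : V → V ⊕ Fin n) '' A ↔ s(a, b) ∈ A := by
  have h : s(Sum.inl a, Sum.inl b) = Sym2.map (Sum.inl : V → V ⊕ Fin n) s(a, b) := by simp
  rw [h, (Sym2.map.injective Sum.inl_injective).mem_set_image]

lemma map_inl_diag_iff (e : Sym2 V) :
    (Sym2.map (Sum.inl : V → V ⊕ Fin n) e).IsDiag ↔ e.IsDiag := by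
  obtain ⟨x, y, rfl⟩ := sym2_rep e
  simp

lemma map_inl_edge_iff (e : Sym2 V) :
    Sym2.map (Sum.inl : V → V ⊕ Fin n) e ∈ (gadgetGraph G n u v).edgeSet ↔ e ∈ G.edgeSet := by
  obtain ⟨x, y, rfl⟩ := sym2_rep e
  simp only [Sym2.map_pair_eq, SimpleGraph.mem_edgeSet]
  exact gadget_adj_inl_inl x y

lemma addEdges_map_adj (A : Set (Sym2 V)) (a b : V) :
    (addEdges (gadgetGraph G n u v) (Sym2.map Sum.inl '' A)).Adj (Sum.inl a) (Sum.inl b) ↔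
      (addEdges G A).Adj a b := by
  rw [addEdges_adj, addEdges_adj, gadget_adj_inl_inl, mem_map_inl_iff]
  simp

lemma not_adj_uv (hnadj : ¬ G.Adj u v) {A : Set (Sym2 V)} (huvA : s(u, v) ∉ A) :
    ¬ (addEdges G A).Adj u v := by
  rw [addEdges_adj]
  rintro (h | ⟨h, _⟩)
  exacts [hnadj h, huvA h]

lemma prisonFree_lift_iff (hnadj : ¬ G.Adj u v) (A : Set (Sym2 V)) (huvA : s(u, v) ∉ A) :
    PrisonFree (addEdges (gadgetGraph G n u v) (Sym2.map Sum.inl '' A)) ↔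
      PrisonFree (addEdges G A) := by
  constructor
  · intro h hQ
    obtain ⟨Q, hQ⟩ := hQ
    exact h ⟨_, prison_lift (addEdges_map_adj A) hQ⟩
  · intro h hP
    obtain ⟨P, hP⟩ := hP
    have huv' : ¬ (addEdges (gadgetGraph G n u v) (Sym2.map Sum.inl '' A)).Adj
        (Sum.inl u) (Sum.inl v) := by
      rw [addEdges_map_adj]; exact not_adj_uv hnadj huvA
    have hsub : P ⊆ Set.range (Sum.inl : V → V ⊕ Fin n) := by
      rintro (a | j) hx
      · exact ⟨a, rfl⟩
      · exact absurd hx (gadget_no_prison (map_inl_inlPairs A) huv' hP j)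
    obtain ⟨Q, hQ⟩ := prison_restrict (addEdges_map_adj A) hP hsub
    exact h ⟨Q, hQ⟩

lemma completion_map_iff (hnadj : ¬ G.Adj u v) (A : Set (Sym2 V)) (huvA : s(u, v) ∉ A) :
    CompletionSet (gadgetGraph G n u v) (Sym2.map Sum.inl '' A) ↔ CompletionSet G A := by
  unfold CompletionSet
  rw [show addEdges (gadgetGraph G n u v) (Sym2.map Sum.inl '' A)
      = addEdges (gadgetGraph G n u v) (Sym2.map Sum.inl '' A) from rfl,
    prisonFree_lift_iff hnadj A huvA]
  constructor
  · rintro ⟨h1, h2, h3⟩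
    refine ⟨fun e he hd => ?_, fun e he hd => ?_, h3⟩
    · exact h1 _ (Set.mem_image_of_mem _ he) ((map_inl_diag_iff e).mpr hd)
    · exact h2 _ (Set.mem_image_of_mem _ he) ((map_inl_edge_iff e).mpr hd)
  · rintro ⟨h1, h2, h3⟩
    refine ⟨?_, ?_, h3⟩
    · rintro e' ⟨e, he, rfl⟩ hd
      exact h1 e he ((map_inl_diag_iff e).mp hd)
    · rintro e' ⟨e, he, rfl⟩ hd
      exact h2 e he ((map_inl_edge_iff e).mp hd)

end Transfer

section Counting

variable {V : Type*} {G : SimpleGraph V} {k : ℕ} {u v : V}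

/-- The `r`-th gadget vertex of the `i`-th copy. -/
def gv (k : ℕ) (i : Fin (k + 1)) (r : Fin 3) : Fin (3 * (k + 1)) :=
  ⟨3 * i.val + r.val, by omega⟩

/-- The vertex set of the `i`-th copy of the gadget, together with `u` and `v`. -/
def copySet (k : ℕ) (u v : V) (i : Fin (k + 1)) : Set (V ⊕ Fin (3 * (k + 1))) :=
  {Sum.inl u, Sum.inl v, Sum.inr (gv k i 0), Sum.inr (gv k i 1), Sum.inr (gv k i 2)}

lemma copySet_inter (u v : V) {i i' : Fin (k + 1)} (hii : i ≠ i') {z : V ⊕ Fin (3 * (k + 1))}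
    (h1 : z ∈ copySet k u v i) (h2 : z ∈ copySet k u v i') :
    z = Sum.inl u ∨ z = Sum.inl v := by
  have hval : i.val ≠ i'.val := fun h => hii (Fin.ext h)
  simp only [copySet, Set.mem_insert_iff, Set.mem_singleton_iff] at h1 h2
  rcases h1 with rfl | rfl | rfl | rfl | rfl
  · exact Or.inl rfl
  · exact Or.inr rfl
  all_goals
    rcases h2 with h2 | h2 | h2 | h2 | h2 <;>
      simp_all [gv, Fin.ext_iff] <;> omega

lemma copySet_prison (hnadj : ¬ G.Adj u v) (huv : u ≠ v) (i : Fin (k + 1)) :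
    InducesPrison (addEdges (gadgetGraph G (3 * (k + 1)) u v) {s(Sum.inl u, Sum.inl v)})
      (copySet k u v i) := by
  have hinj : Function.Injective
      (![Sum.inl u, Sum.inl v, Sum.inr (gv k i 0), Sum.inr (gv k i 1), Sum.inr (gv k i 2)] :
        Fin 5 → V ⊕ Fin (3 * (k + 1))) := by
    intro a b h
    fin_cases a <;> fin_cases b <;> simp_all [gv, Fin.ext_iff, huv, huv.symm]
  refine ⟨⟨_, hinj⟩, ?_, ?_⟩
  · ext x
    constructor
    · rintro ⟨a, rfl⟩
      fin_cases a <;> simp [copySet]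
    · intro hx
      simp only [copySet, Set.mem_insert_iff, Set.mem_singleton_iff] at hx
      rcases hx with rfl | rfl | rfl | rfl | rfl
      exacts [⟨0, by simp⟩, ⟨1, by simp⟩, ⟨2, by simp⟩, ⟨3, by simp⟩, ⟨4, by simp⟩]
  · intro a b
    fin_cases a <;> fin_cases b <;>
      simp [addEdges_adj, gadget_adj_inl_inl, gadget_adj_inl_inr, gadget_adj_inr_inl,
        gadget_adj_inr_inr, prison, gv, Sym2.eq_iff, huv, huv.symm, hnadj, Fin.ext_iff] <;>
      omega

/-- Every solution of the gadget instance avoids the pair `uv`. -/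
lemma gadget_solution_not_uv (hnadj : ¬ G.Adj u v) (huv : u ≠ v)
    (A' : Set (Sym2 (V ⊕ Fin (3 * (k + 1)))))
    (hsol : Solution (gadgetGraph G (3 * (k + 1)) u v) k A') :
    s(Sum.inl u, Sum.inl v) ∉ A' := by
  intro hmem
  obtain ⟨⟨hnd, hne, hpf⟩, hfin, hcard⟩ := hsol
  -- each copy forces a private pair of `A'` inside it
  have key : ∀ i : Fin (k + 1), ∃ e ∈ A', e ≠ s(Sum.inl u, Sum.inl v) ∧
      ∀ z ∈ e, z ∈ copySet k u v i := by
    intro i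
    by_contra hno
    push_neg at hno
    apply hpf
    refine ⟨copySet k u v i, prison_congr (K := addEdges (gadgetGraph G (3 * (k + 1)) u v) A')
      (fun x hx y hy => ?_) (copySet_prison hnadj huv i)⟩
    rw [addEdges_adj, addEdges_adj]
    constructor
    · rintro (h | ⟨h, hxy⟩)
      · exact Or.inl h
      · rw [Set.mem_singleton_iff] at h
        exact Or.inr ⟨h ▸ hmem, hxy⟩
    · rintro (h | ⟨h, hxy⟩)
      · exact Or.inl h
      · refine Or.inr ⟨Set.mem_singleton_iff.mpr ?_, hxy⟩
        by_contra hneq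
        have := hno _ h hneq
        obtain ⟨z, hz1, hz2⟩ := this
        rw [Sym2.mem_iff] at hz1
        rcases hz1 with rfl | rfl
        exacts [hz2 hx, hz2 hy]
  choose e he1 he2 he3 using key
  -- the chosen pairs are pairwise distinct
  have einj : Function.Injective e := by
    intro i i' hee
    by_contra hii
    obtain ⟨x, y, hxy⟩ := sym2_rep (e i)
    have hx : x ∈ copySet k u v i := he3 i x (by rw [hxy]; exact Sym2.mem_mk_left x y)
    have hy : y ∈ copySet k u v i := he3 i y (by rw [hxy]; exact Sym2.mem_mk_right x y)
    have hx' : x ∈ copySet k u v i' := he3 i' x (by rw [← hee, hxy]; exact Sym2.mem_mk_left x y)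
    have hy' : y ∈ copySet k u v i' := he3 i' y (by rw [← hee, hxy]; exact Sym2.mem_mk_right x y)
    have hxuv := copySet_inter u v hii hx hx'
    have hyuv := copySet_inter u v hii hy hy'
    have hxyne : x ≠ y := by
      intro h
      exact hnd _ (he1 i) (by rw [hxy, h]; exact Sym2.mk_isDiag_iff.mpr rfl)
    apply he2 i
    rw [hxy]
    rcases hxuv with rfl | rfl <;> rcases hyuv with rfl | rfl
    · exact absurd rfl hxyne
    · rfl
    · exact Sym2.eq_swap
    · exact absurd rfl hxyne
  have hsub : insert s(Sum.inl u, Sum.inl v) (Set.range e) ⊆ A' := by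
    rintro f hf
    rcases Set.mem_insert_iff.mp hf with rfl | ⟨i, rfl⟩
    exacts [hmem, he1 i]
  have hrange_card : (Set.range e).ncard = k + 1 := by
    rw [← Set.image_univ, Set.ncard_image_of_injective _ einj, Set.ncard_univ]
    simp
  have hcard2 : (insert s(Sum.inl u, Sum.inl v) (Set.range e)).ncard = k + 2 := by
    rw [Set.ncard_insert_of_notMem (by rintro ⟨i, hi⟩; exact he2 i hi) (Set.finite_range e),
      hrange_card]
  have := Set.ncard_le_ncard hsub hfin
  omega

end Counting


/-- Forbidden-edge gadget: for every graph `G`, `k ≥ 1` and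
non-adjacent distinct vertices `u, v`, there is a graph `G'` on `V(G)` plus
`3(k+1)` new vertices, inducing `G` on `V(G)`, whose minimal solutions are exactly
the minimal solutions `A` of `(G,k)` with `uv ∉ A`, and all of whose solutions
avoid `uv`. -/
theorem forbidden_edge_gadget {V : Type*} [Fintype V] [DecidableEq V]
    (G : SimpleGraph V) (k : ℕ) (hk : 1 ≤ k) (u v : V) (huv : u ≠ v)
    (hnadj : ¬ G.Adj u v) :
    ∃ G' : SimpleGraph (V ⊕ Fin (3 * (k + 1))),
      (∀ a b : V, G'.Adj (Sum.inl a) (Sum.inl b) ↔ G.Adj a b) ∧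
      (∀ A' : Set (Sym2 (V ⊕ Fin (3 * (k + 1)))),
        MinSolution G' k A' ↔
          ∃ A : Set (Sym2 V), MinSolution G k A ∧ s(u, v) ∉ A ∧
            A' = Sym2.map Sum.inl '' A) ∧
      (∀ A' : Set (Sym2 (V ⊕ Fin (3 * (k + 1)))),
        Solution G' k A' → s(Sum.inl u, Sum.inl v) ∉ A') := by
    classical
  set n := 3 * (k + 1)
  refine ⟨gadgetGraph G n u v, fun a b => Iff.rfl, fun A' => ?_, fun A' hsol =>
    gadget_solution_not_uv hnadj huv A' hsol⟩
  have hminj : Function.Injective (Sym2.map (Sum.inl : V → V ⊕ Fin n)) :=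
    Sym2.map.injective Sum.inl_injective
  constructor
  · -- forward direction
    rintro ⟨⟨hcs, hfin, hcard⟩, hmin⟩
    have huvA' : s(Sum.inl u, Sum.inl v) ∉ A' :=
      gadget_solution_not_uv hnadj huv A' ⟨hcs, hfin, hcard⟩
    -- step 1: all pairs of A' are inl-inl
    set A'' : Set (Sym2 (V ⊕ Fin n)) := {e ∈ A' | ∃ a b : V, e = s(Sum.inl a, Sum.inl b)}
      with hA''def
    have hA''sub : A'' ⊆ A' := fun e he => he.1
    have hA''pairs : InlPairs A'' := fun e he => he.2
    have huvadj'' : ¬ (addEdges (gadgetGraph G n u v) A'').Adj (Sum.inl u) (Sum.inl v) := by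
      rw [addEdges_adj]
      rintro (h | ⟨h, _⟩)
      · exact hnadj ((gadget_adj_inl_inl u v).mp h)
      · exact huvA' (hA''sub h)
    have hcs'' : CompletionSet (gadgetGraph G n u v) A'' := by
      refine ⟨fun e he => hcs.1 e (hA''sub he), fun e he => hcs.2.1 e (hA''sub he), ?_⟩
      rintro ⟨P, hP⟩
      have hsub : P ⊆ Set.range (Sum.inl : V → V ⊕ Fin n) := by
        rintro (a | j) hx
        · exact ⟨a, rfl⟩
        · exact absurd hx (gadget_no_prison hA''pairs huvadj'' hP j)
      refine hcs.2.2 ⟨P, prison_congr (fun x hx y hy => ?_) hP⟩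
      rw [addEdges_adj, addEdges_adj]
      constructor
      · rintro (h | ⟨h, hxy⟩)
        · exact Or.inl h
        · exact Or.inr ⟨hA''sub h, hxy⟩
      · rintro (h | ⟨h, hxy⟩)
        · exact Or.inl h
        · obtain ⟨a, rfl⟩ := hsub hx
          obtain ⟨b, rfl⟩ := hsub hy
          exact Or.inr ⟨⟨h, a, b, rfl⟩, hxy⟩
    have hAA : A'' = A' := by
      by_contra hne
      exact hmin A'' ⟨hA''sub, fun h => hne (le_antisymm hA''sub h)⟩ hcs''
    set A : Set (Sym2 V) := Sym2.map Sum.inl ⁻¹' A' with hAdef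
    have himg : Sym2.map (Sum.inl : V → V ⊕ Fin n) '' A = A' := by
      apply Set.Subset.antisymm
      · rintro e' ⟨e, he, rfl⟩; exact he
      · intro e' he'
        obtain ⟨a, b, rfl⟩ := (hAA ▸ he' : e' ∈ A'').2
        exact ⟨s(a, b), by simpa [hAdef] using he', by simp⟩
    have huvA : s(u, v) ∉ A := by
      intro h
      exact huvA' (by simpa using Set.mem_preimage.mp h)
    refine ⟨A, ⟨⟨?_, ?_, ?_⟩, ?_⟩, huvA, himg.symm⟩
    · exact (completion_map_iff hnadj A huvA).mp (himg ▸ hcs)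
    · exact Set.Finite.of_finite_image (himg ▸ hfin) hminj.injOn
    · rw [← Set.ncard_image_of_injective A hminj, himg]
      exact hcard
    · intro B hB hcsB
      have hBimg : Sym2.map (Sum.inl : V → V ⊕ Fin n) '' B ⊂ A' := by
        rw [← himg]
        exact (hminj.injOn.image_ssubset_image_iff (Set.subset_univ _)
          (Set.subset_univ _)).mpr hB
      exact hmin _ hBimg ((completion_map_iff hnadj B
        (fun h => huvA (hB.subset h))).mpr hcsB)
  · -- backward direction
    rintro ⟨A, ⟨⟨hcs, hfin, hcard⟩, hmin⟩, huvA, rfl⟩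
    refine ⟨⟨(completion_map_iff hnadj A huvA).mpr hcs, hfin.image _, ?_⟩, ?_⟩
    · rw [Set.ncard_image_of_injective A hminj]; exact hcard
    · intro B' hB' hcsB'
      set B : Set (Sym2 V) := {e ∈ A | Sym2.map Sum.inl e ∈ B'} with hBdef
      have hBA : B ⊆ A := fun e he => he.1
      have hBimg : Sym2.map (Sum.inl : V → V ⊕ Fin n) '' B = B' := by
        apply Set.Subset.antisymm
        · rintro e' ⟨e, he, rfl⟩; exact he.2
        · intro e' he'
          obtain ⟨e, heA, rfl⟩ := hB'.subset he'
          exact ⟨e, ⟨heA, he'⟩, rfl⟩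
      have hBne : B ≠ A := fun h => hB'.ne (h ▸ hBimg).symm
      exact hmin B ⟨hBA, fun h => hBne (le_antisymm hBA h)⟩
        ((completion_map_iff hnadj B (fun h => huvA (hBA h))).mp (hBimg ▸ hcsB'))


end PrisonFreePaper
end

section
/- For every graph G and every integer k≥1, at least one of the following holds: (a) G contains k+2 five-vertex sets, each inducing a prison, whose edge sets are pairwise disjoint (so that (G,k) is a no-instance of Prison-Free Edge Deletion); or (b) there exists a set S⊆V(G) with |S| ≤ 5·8!·(k+1)^8 such that for every 5-vertex set P inducing a prison in G and every A⊆E(G) with |A|≤k, if deleting the edges of A from the induced subgraph G[S] yields a prison-free graph, then A contains an edge of G[P]. -/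
namespace PrisonFreePaper

variable {V : Type*}

section Aux
open Finset
variable {α : Type*} [DecidableEq α]




theorem sunflower_lemma (s : ℕ) :
    ∀ (q : ℕ), 1 ≤ q → ∀ (F : Finset (Finset α)),
    (∀ X ∈ F, X.card = s) → Nat.factorial s * q ^ s < F.card →
    ∃ S ⊆ F, S.card = q + 1 ∧ ∃ C : Finset α, ∀ X ∈ S, ∀ Y ∈ S, X ≠ Y → X ∩ Y = C := by
  induction s with
  | zero =>
    intro q hq F hcard hF
    exfalso
    have hsub : F ⊆ {∅} := by
      intro X hX
      simp [Finset.card_eq_zero.mp (hcard X hX)]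
    have := Finset.card_le_card hsub
    simp [Nat.factorial] at hF
    simp at this
    omega
  | succ s ih =>
    intro q hq F hcard hF
    classical
    set 𝒞 : Finset (Finset (Finset α)) :=
      F.powerset.filter (fun D => ∀ X ∈ D, ∀ Y ∈ D, X ≠ Y → Disjoint X Y) with h𝒞
    have hne : 𝒞.Nonempty := ⟨∅, by simp [h𝒞]⟩
    obtain ⟨D, hD𝒞, hDmax⟩ : ∃ m ∈ 𝒞, ∀ x ∈ 𝒞, ¬ m < x := by
      obtain ⟨D, hD⟩ := Finset.exists_maximal hne
      exact ⟨D, hD.1, fun x hx hlt => (lt_iff_le_not_ge.mp hlt).2 (hD.2 hx hlt.le)⟩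
    rw [h𝒞, Finset.mem_filter, Finset.mem_powerset] at hD𝒞
    obtain ⟨hDF, hDdisj⟩ := hD𝒞
    by_cases hDcard : q + 1 ≤ D.card
    · obtain ⟨S, hSD, hScard⟩ := Finset.exists_subset_card_eq hDcard
      exact ⟨S, hSD.trans hDF, hScard, ∅, fun X hX Y hY hXY =>
        Finset.disjoint_iff_inter_eq_empty.mp (hDdisj X (hSD hX) Y (hSD hY) hXY)⟩
    · push_neg at hDcard
      have hDq : D.card ≤ q := by omega
      set X0 : Finset α := D.biUnion id with hX0
      have hmeet : ∀ Y ∈ F, (Y ∩ X0).Nonempty := by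
        intro Y hY
        have hYne : Y.Nonempty := by
          rw [← Finset.card_pos, hcard Y hY]; omega
        by_cases hYD : Y ∈ D
        · have hsub : Y ⊆ X0 := by
            intro x hx; rw [hX0]; exact Finset.mem_biUnion.mpr ⟨Y, hYD, hx⟩
          obtain ⟨x, hx⟩ := hYne
          exact ⟨x, Finset.mem_inter.mpr ⟨hx, hsub hx⟩⟩
        · by_contra h
          rw [Finset.not_nonempty_iff_eq_empty] at h
          have hdisjY : ∀ X ∈ D, Disjoint Y X := by
            intro X hXD
            have hXsub : X ⊆ X0 := fun x hx => Finset.mem_biUnion.mpr ⟨X, hXD, hx⟩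
            have : Disjoint Y X0 := Finset.disjoint_iff_inter_eq_empty.mpr h
            exact this.mono_right hXsub
          have hmem : insert Y D ∈ 𝒞 := by
            rw [h𝒞, Finset.mem_filter, Finset.mem_powerset]
            constructor
            · exact Finset.insert_subset hY hDF
            · intro X hX Z hZ hXZ
              rcases Finset.mem_insert.mp hX with h1 | h1
              · rcases Finset.mem_insert.mp hZ with h2 | h2
                · exact absurd (h1.trans h2.symm) hXZ
                · subst h1; exact hdisjY Z h2
              · rcases Finset.mem_insert.mp hZ with h2 | h2
                · subst h2; exact (hdisjY X h1).symm
                · exact hDdisj X h1 Z h2 hXZ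
          exact hDmax _ hmem (Finset.ssubset_insert hYD)
      have hX0card : X0.card ≤ (s + 1) * q := by
        calc X0.card ≤ ∑ X ∈ D, (id X).card := Finset.card_biUnion_le
          _ = ∑ X ∈ D, (s + 1) := by
              apply Finset.sum_congr rfl; intro X hX; exact hcard X (hDF hX)
          _ = D.card * (s + 1) := by rw [Finset.sum_const, smul_eq_mul]
          _ ≤ (s + 1) * q := by rw [mul_comm]; exact Nat.mul_le_mul_left _ hDq
      -- pigeonhole
      have hsubU : F ⊆ X0.biUnion (fun x => F.filter (fun Y => x ∈ Y)) := by
        intro Y hY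
        obtain ⟨x, hx⟩ := hmeet Y hY
        rw [Finset.mem_inter] at hx
        exact Finset.mem_biUnion.mpr ⟨x, hx.2, Finset.mem_filter.mpr ⟨hY, hx.1⟩⟩
      obtain ⟨x, hxX0, hxcount⟩ :
          ∃ x ∈ X0, Nat.factorial s * q ^ s < (F.filter (fun Y => x ∈ Y)).card := by
        by_contra h
        push_neg at h
        have h1 : F.card ≤ ∑ x ∈ X0, (F.filter (fun Y => x ∈ Y)).card :=
          le_trans (Finset.card_le_card hsubU) Finset.card_biUnion_le
        have h2 : ∑ x ∈ X0, (F.filter (fun Y => x ∈ Y)).card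
            ≤ X0.card * (Nat.factorial s * q ^ s) := by
          calc ∑ x ∈ X0, (F.filter (fun Y => x ∈ Y)).card
              ≤ ∑ _x ∈ X0, (Nat.factorial s * q ^ s) :=
                Finset.sum_le_sum (fun x hx => h x hx)
            _ = X0.card * (Nat.factorial s * q ^ s) := by
                rw [Finset.sum_const, smul_eq_mul]
        have h3 : X0.card * (Nat.factorial s * q ^ s)
            ≤ (s + 1) * q * (Nat.factorial s * q ^ s) :=
          Nat.mul_le_mul_right _ hX0card
        have h4 : (s + 1) * q * (Nat.factorial s * q ^ s)
            = Nat.factorial (s + 1) * q ^ (s + 1) := by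
          rw [Nat.factorial_succ, pow_succ]; ring
        omega
      set Fx : Finset (Finset α) :=
        (F.filter (fun Y => x ∈ Y)).image (fun Y => Y.erase x) with hFx
      have hinj : Set.InjOn (fun Y : Finset α => Y.erase x)
          ((F.filter (fun Y => x ∈ Y) : Finset (Finset α)) : Set (Finset α)) := by
        intro Y1 h1 Y2 h2 he
        have hx1 : x ∈ Y1 := (Finset.mem_filter.mp (Finset.mem_coe.mp h1)).2
        have hx2 : x ∈ Y2 := (Finset.mem_filter.mp (Finset.mem_coe.mp h2)).2
        rw [← Finset.insert_erase hx1, ← Finset.insert_erase hx2]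
        simp only at he
        rw [he]
      have hFxcard : Nat.factorial s * q ^ s < Fx.card := by
        rw [hFx, Finset.card_image_of_injOn hinj]; exact hxcount
      have hFxsize : ∀ Z ∈ Fx, Z.card = s := by
        intro Z hZ
        rw [hFx, Finset.mem_image] at hZ
        obtain ⟨Y, hY, rfl⟩ := hZ
        rw [Finset.mem_filter] at hY
        rw [Finset.card_erase_of_mem hY.2, hcard Y hY.1]
        omega
      obtain ⟨S', hS'sub, hS'card, C, hC⟩ := ih q hq Fx hFxsize hFxcard
      have hxnotmem : ∀ Z ∈ S', x ∉ Z := by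
        intro Z hZ
        have := hS'sub hZ
        rw [hFx, Finset.mem_image] at this
        obtain ⟨Y, _, rfl⟩ := this
        exact Finset.notMem_erase x Y
      refine ⟨S'.image (insert x), ?_, ?_, insert x C, ?_⟩
      · intro W hW
        rw [Finset.mem_image] at hW
        obtain ⟨Z, hZ, rfl⟩ := hW
        have := hS'sub hZ
        rw [hFx, Finset.mem_image] at this
        obtain ⟨Y, hY, rfl⟩ := this
        rw [Finset.mem_filter] at hY
        rw [Finset.insert_erase hY.2]
        exact hY.1
      · rw [Finset.card_image_of_injOn, hS'card]
        intro Z1 h1 Z2 h2 he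
        rw [← Finset.erase_insert (hxnotmem Z1 h1), ← Finset.erase_insert (hxnotmem Z2 h2), he]
      · intro W1 hW1 W2 hW2 hne'
        rw [Finset.mem_image] at hW1 hW2
        obtain ⟨Z1, hZ1, rfl⟩ := hW1
        obtain ⟨Z2, hZ2, rfl⟩ := hW2
        have hZne : Z1 ≠ Z2 := by rintro rfl; exact hne' rfl
        have : Z1 ∩ Z2 = C := hC Z1 hZ1 Z2 hZ2 hZne
        rw [← this]
        ext y
        simp only [Finset.mem_inter, Finset.mem_insert]
        tauto

theorem rep_family (k : ℕ)
    (sun : ∀ (F : Finset (Finset α)), (∀ X ∈ F, X.card = 8) →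
      Nat.factorial 8 * (k+1) ^ 8 < F.card →
      ∃ S ⊆ F, S.card = (k+1) + 1 ∧ ∃ C : Finset α, ∀ X ∈ S, ∀ Y ∈ S, X ≠ Y → X ∩ Y = C)
    (F : Finset (Finset α)) (hcard : ∀ X ∈ F, X.card = 8) :
    ∃ G ⊆ F, G.card ≤ Nat.factorial 8 * (k+1)^8 ∧
      ∀ X ∈ F, ∀ A : Finset α, A.card ≤ k →
        (∀ Y ∈ G, (A ∩ Y).Nonempty) → (A ∩ X).Nonempty := by
  classical
  induction F using Finset.strongInduction with
  | _ F ih =>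
  by_cases hle : F.card ≤ Nat.factorial 8 * (k+1)^8
  · exact ⟨F, Finset.Subset.refl F, hle, fun X hX A _ hA => hA X hX⟩
  · push_neg at hle
    obtain ⟨S, hSF, hScard, C, hC⟩ := sun F hcard hle
    have hSne : S.Nonempty := by rw [← Finset.card_pos, hScard]; omega
    obtain ⟨Y₀, hY₀S⟩ := hSne
    have hY₀F : Y₀ ∈ F := hSF hY₀S
    have hss : F.erase Y₀ ⊂ F := Finset.erase_ssubset hY₀F
    obtain ⟨G, hGsub, hGcard, hGprop⟩ :=
      ih (F.erase Y₀) hss (fun X hX => hcard X (Finset.mem_of_mem_erase hX))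
    refine ⟨G, hGsub.trans (Finset.erase_subset _ _), hGcard, ?_⟩
    intro X hX A hAcard hhit
    by_cases hXY₀ : X = Y₀
    · subst hXY₀
      by_contra hA0
      rw [Finset.not_nonempty_iff_eq_empty] at hA0
      have hhit' : ∀ Z ∈ F.erase X, (A ∩ Z).Nonempty :=
        fun Z hZ => hGprop Z hZ A hAcard hhit
      set T := S.erase X with hT
      have hTsub : T ⊆ F.erase X := fun Z hZ =>
        Finset.mem_erase.mpr ⟨(Finset.mem_erase.mp hZ).1, hSF (Finset.mem_of_mem_erase hZ)⟩
      have hTcard : T.card = k + 1 := by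
        rw [hT, Finset.card_erase_of_mem hY₀S, hScard]
        omega
      have hTne : T.Nonempty := by rw [← Finset.card_pos, hTcard]; omega
      obtain ⟨Y₁, hY₁T⟩ := hTne
      have hY₁S : Y₁ ∈ S := Finset.mem_of_mem_erase hY₁T
      have hY₁ne : Y₁ ≠ X := (Finset.mem_erase.mp hY₁T).1
      have hCY₀ : C ⊆ X := by
        rw [← hC X hY₀S Y₁ hY₁S (Ne.symm hY₁ne)]
        exact Finset.inter_subset_left
      have hAC : A ∩ C = ∅ := by
        apply Finset.eq_empty_of_forall_notMem
        intro a ha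
        rw [Finset.mem_inter] at ha
        have : a ∈ A ∩ X := Finset.mem_inter.mpr ⟨ha.1, hCY₀ ha.2⟩
        rw [hA0] at this
        exact absurd this (Finset.notMem_empty a)
      obtain ⟨a₀, ha₀⟩ := hhit' Y₁ (hTsub hY₁T)
      set g : Finset α → α := fun Z => if h : (A ∩ Z).Nonempty then h.choose else a₀ with hg
      have hgmem : ∀ Z ∈ T, g Z ∈ A ∩ Z := by
        intro Z hZ
        have h := hhit' Z (hTsub hZ)
        simp only [hg, dif_pos h]
        exact h.choose_spec
      have hginj : Set.InjOn g ↑T := by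
        intro Z₁ h₁ Z₂ h₂ he
        by_contra hne
        have hZ₁S : Z₁ ∈ S := Finset.mem_of_mem_erase (Finset.mem_coe.mp h₁)
        have hZ₂S : Z₂ ∈ S := Finset.mem_of_mem_erase (Finset.mem_coe.mp h₂)
        have hm₁ := hgmem Z₁ (Finset.mem_coe.mp h₁)
        have hm₂ := hgmem Z₂ (Finset.mem_coe.mp h₂)
        rw [Finset.mem_inter] at hm₁ hm₂
        have : g Z₁ ∈ Z₁ ∩ Z₂ := Finset.mem_inter.mpr ⟨hm₁.2, he ▸ hm₂.2⟩
        rw [hC Z₁ hZ₁S Z₂ hZ₂S hne] at this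
        have : g Z₁ ∈ A ∩ C := Finset.mem_inter.mpr ⟨hm₁.1, this⟩
        rw [hAC] at this
        exact absurd this (Finset.notMem_empty _)
      have : T.card ≤ A.card :=
        Finset.card_le_card_of_injOn g (fun Z hZ => (Finset.mem_inter.mp (hgmem Z hZ)).1) hginj
      omega
    · exact hGprop X (Finset.mem_erase.mpr ⟨hXY₀, hX⟩) A hAcard hhit


end Aux

instance : DecidableRel prison.Adj := fun a b =>
  inferInstanceAs (Decidable (a ≠ b ∧ ¬((a = 4 ∧ (b = 2 ∨ b = 3)) ∨ (b = 4 ∧ (a = 2 ∨ a = 3)))))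

lemma prison_edgeSet_ncard : prison.edgeSet.ncard = 8 := by
  rw [Set.ncard_eq_toFinset_card']
  decide

lemma edgesWithin_eq_image {G : SimpleGraph V} {f : Fin 5 ↪ V}
    (hiff : ∀ a b, G.Adj (f a) (f b) ↔ prison.Adj a b) :
    edgesWithin G (Set.range f) = Sym2.map f '' prison.edgeSet := by
  ext e
  induction e with
  | _ x y =>
    constructor
    · rintro ⟨hadj, hx, hy⟩
      obtain ⟨a, rfl⟩ := hx
      obtain ⟨b, rfl⟩ := hy
      exact ⟨s(a, b), (hiff a b).mp hadj, rfl⟩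
    · rintro ⟨e', he', hmap⟩
      induction e' with
      | _ a b =>
        simp only [Sym2.map_pair_eq] at hmap
        have hadj' : prison.Adj a b := he'
        rw [Sym2.eq_iff] at hmap
        rcases hmap with ⟨rfl, rfl⟩ | ⟨rfl, rfl⟩
        · exact ⟨(hiff a b).mpr hadj', Set.mem_range_self a, Set.mem_range_self b⟩
        · exact ⟨((hiff a b).mpr hadj').symm, Set.mem_range_self b, Set.mem_range_self a⟩

lemma edgesWithin_prison_ncard {G : SimpleGraph V} {P : Set V}
    (h : InducesPrison G P) : (edgesWithin G P).ncard = 8 := by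
  obtain ⟨f, hrange, hiff⟩ := h
  rw [← hrange, edgesWithin_eq_image hiff,
    Set.ncard_image_of_injective _ (Sym2.map.injective f.injective)]
  exact prison_edgeSet_ncard

lemma prison_ncard {G : SimpleGraph V} {P : Set V}
    (h : InducesPrison G P) : P.ncard = 5 := by
  obtain ⟨f, hrange, _⟩ := h
  rw [← hrange, ← Set.image_univ, Set.ncard_image_of_injective _ f.injective,
    Set.ncard_univ]
  simp

lemma prison_preserved {G : SimpleGraph V} {S P : Set V} {A : Set (Sym2 V)}
    (hP : InducesPrison G P) (hPS : P ⊆ S) (hA : ∀ e ∈ A, e ∉ edgesWithin G P) :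
    InducesPrison ((inducedOn G S).deleteEdges A) P := by
  obtain ⟨f, hrange, hiff⟩ := hP
  refine ⟨f, hrange, ?_⟩
  intro a b
  rw [SimpleGraph.deleteEdges_adj]
  constructor
  · rintro ⟨⟨hadj, _, _⟩, _⟩
    exact (hiff a b).mp hadj
  · intro hpr
    have hadj := (hiff a b).mpr hpr
    have hfa : f a ∈ P := hrange ▸ Set.mem_range_self a
    have hfb : f b ∈ P := hrange ▸ Set.mem_range_self b
    refine ⟨⟨hadj, hPS hfa, hPS hfb⟩, ?_⟩
    intro hmem
    exact hA _ hmem ⟨hadj, hfa, hfb⟩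


/-- For every graph `G` and `k ≥ 1`: either `G` contains `k+2`
pairwise edge-disjoint induced prisons (so `(G,k)` is a no-instance), or there is a
set `S` with `|S| ≤ 5·8!·(k+1)⁸` such that any edge set `A` of size at most `k`
whose deletion from `G[S]` leaves a prison-free graph contains an edge of every
prison of `G`. -/
theorem sunflower_modulator {V : Type*} [Fintype V] (G : SimpleGraph V)
    (k : ℕ) (hk : 1 ≤ k) :
    (∃ Ps : Fin (k + 2) → Set V,
      (∀ i, InducesPrison G (Ps i)) ∧
      ∀ i j, i ≠ j → Disjoint (edgesWithin G (Ps i)) (edgesWithin G (Ps j))) ∨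
    (∃ S : Set V, S.ncard ≤ 5 * Nat.factorial 8 * (k + 1) ^ 8 ∧
      GoodModulator G k S) := by
  classical
  right
  -- the family of edge sets (as finsets) of all prisons in `G`
  set EF : Set V → Finset (Sym2 V) := fun P => (edgesWithin G P).toFinite.toFinset with hEF
  set F : Finset (Finset (Sym2 V)) :=
    (Set.toFinite {X : Finset (Sym2 V) | ∃ P, InducesPrison G P ∧ X = EF P}).toFinset with hF
  have hFmem : ∀ X, X ∈ F ↔ ∃ P, InducesPrison G P ∧ X = EF P := by
    intro X; rw [hF, Set.Finite.mem_toFinset]; rfl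
  have hcard8 : ∀ X ∈ F, X.card = 8 := by
    intro X hX
    obtain ⟨P, hP, rfl⟩ := (hFmem X).mp hX
    rw [hEF]
    rw [← Set.ncard_eq_toFinset_card (edgesWithin G P)]
    exact edgesWithin_prison_ncard hP
  obtain ⟨G0, hG0F, hG0card, hG0prop⟩ :=
    rep_family k (fun F' h1 h2 => sunflower_lemma 8 (k + 1) (by omega) F' h1 h2) F hcard8
  -- choose a prison for each member of `G0`
  set Q : Finset (Sym2 V) → Set V := fun Y =>
    if h : ∃ P, InducesPrison G P ∧ Y = EF P then h.choose else ∅ with hQ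
  have hQspec : ∀ Y ∈ G0, InducesPrison G (Q Y) ∧ Y = EF (Q Y) := by
    intro Y hY
    have h := (hFmem Y).mp (hG0F hY)
    rw [hQ]
    simp only [dif_pos h]
    exact h.choose_spec
  set Sf : Finset V := G0.biUnion (fun Y => (Q Y).toFinite.toFinset) with hSf
  refine ⟨(Sf : Set V), ?_, ?_⟩
  · rw [Set.ncard_coe_finset]
    calc Sf.card ≤ ∑ Y ∈ G0, ((Q Y).toFinite.toFinset).card := Finset.card_biUnion_le
      _ = ∑ Y ∈ G0, 5 := by
          apply Finset.sum_congr rfl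
          intro Y hY
          rw [← Set.ncard_eq_toFinset_card (Q Y)]
          exact prison_ncard (hQspec Y hY).1
      _ = G0.card * 5 := by rw [Finset.sum_const, smul_eq_mul]
      _ ≤ (Nat.factorial 8 * (k + 1) ^ 8) * 5 := Nat.mul_le_mul_right _ hG0card
      _ = 5 * Nat.factorial 8 * (k + 1) ^ 8 := by ring
  · intro P hP A hAsub hAfin hAk hPF
    set A' : Finset (Sym2 V) := hAfin.toFinset with hA'
    have hA'card : A'.card ≤ k := by
      rw [hA', ← Set.ncard_eq_toFinset_card A]
      exact hAk
    have hhit : ∀ Y ∈ G0, (A' ∩ Y).Nonempty := by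
      intro Y hY
      obtain ⟨hQpr, hYeq⟩ := hQspec Y hY
      by_contra hcon
      rw [Finset.not_nonempty_iff_eq_empty] at hcon
      have hQS : Q Y ⊆ (Sf : Set V) := by
        intro x hx
        rw [Finset.mem_coe, hSf]
        exact Finset.mem_biUnion.mpr ⟨Y, hY, (Set.Finite.mem_toFinset _).mpr hx⟩
      have hAnot : ∀ e ∈ A, e ∉ edgesWithin G (Q Y) := by
        intro e heA hemem
        have h1 : e ∈ A' := (Set.Finite.mem_toFinset _).mpr heA
        have h2 : e ∈ Y := by
          rw [hYeq, hEF]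
          exact (Set.Finite.mem_toFinset _).mpr hemem
        have : e ∈ A' ∩ Y := Finset.mem_inter.mpr ⟨h1, h2⟩
        rw [hcon] at this
        exact absurd this (Finset.notMem_empty e)
      exact hPF ⟨Q Y, prison_preserved hQpr hQS hAnot⟩
    have hPX : EF P ∈ F := (hFmem (EF P)).mpr ⟨P, hP, rfl⟩
    obtain ⟨e, he⟩ := hG0prop (EF P) hPX A' hA'card hhit
    rw [Finset.mem_inter] at he
    refine ⟨e, (Set.Finite.mem_toFinset _).mp he.1, ?_⟩
    have := he.2
    rw [hEF] at this
    exact (Set.Finite.mem_toFinset _).mp this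

end PrisonFreePaper
end

section
/- Let G be a graph, k∈ℕ, and S⊆V(G) a set such that for every 5-vertex set P inducing a prison in G and every A⊆E(G) with |A|≤k, if deleting the edges of A from G[S] yields a prison-free graph then A contains an edge of G[P]. Let e∈E(G) be an edge not having both endpoints in S and not contained in any strict supergraph of a prison in G. Then (G,k) is a yes-instance of Prison-Free Edge Deletion if and only if (G−e,k) is a yes-instance of Prison-Free Edge Deletion. -/
namespace PrisonFreePaper

variable {V : Type*}

section Aux

lemma prison_adj_iff (a b : Fin 5) :
    prison.Adj a b ↔ a ≠ b ∧
      ¬((a = 4 ∧ (b = 2 ∨ b = 3)) ∨ (b = 4 ∧ (a = 2 ∨ a = 3))) := Iff.rfl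

lemma prison_nonadj {a b : Fin 5} (hab : a ≠ b) (h : ¬ prison.Adj a b) :
    (a = 4 ∧ b = 2) ∨ (a = 4 ∧ b = 3) ∨ (a = 2 ∧ b = 4) ∨ (a = 3 ∧ b = 4) := by
  rw [prison_adj_iff] at h
  exact (by decide : ∀ a b : Fin 5, a ≠ b →
    ¬(a ≠ b ∧ ¬((a = 4 ∧ (b = 2 ∨ b = 3)) ∨ (b = 4 ∧ (a = 2 ∨ a = 3)))) →
    (a = 4 ∧ b = 2) ∨ (a = 4 ∧ b = 3) ∨ (a = 2 ∧ b = 4) ∨ (a = 3 ∧ b = 4)) a b hab h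

lemma prison_not_adj_42 : ¬ prison.Adj 4 2 := by rw [prison_adj_iff]; decide

lemma prison_not_adj_43 : ¬ prison.Adj 4 3 := by rw [prison_adj_iff]; decide

lemma prison_exists_adj (a : Fin 5) : ∃ b, prison.Adj a b := by
  obtain ⟨b, hb⟩ := (by decide : ∀ a : Fin 5, ∃ b : Fin 5,
    a ≠ b ∧ ¬((a = 4 ∧ (b = 2 ∨ b = 3)) ∨ (b = 4 ∧ (a = 2 ∨ a = 3)))) a
  exact ⟨b, (prison_adj_iff a b).mpr hb⟩

lemma range_ncard (f : Fin 5 ↪ V) : (Set.range ⇑f).ncard = 5 := by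
  rw [← Set.image_univ, Set.ncard_image_of_injective _ f.injective, Set.ncard_univ]
  simp

lemma strictSup_mono {G : SimpleGraph V} {A : Set (Sym2 V)} {P : Set V}
    (hs : StrictSupPrison (G.deleteEdges A) P) : StrictSupPrison G P := by
  obtain ⟨h5, a, b, hp⟩ := hs
  refine ⟨h5, a, b, fun x hx y hy hxy hadj => hp x hx y hy hxy ?_⟩
  intro hc
  rw [SimpleGraph.deleteEdges_adj] at hc
  exact hadj hc.1

/-- Master case analysis: if deleting some edge set from `G` turns the 5-set
`range f` into a prison, then either `G` already induces a prison there (via the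
same embedding), or `G[range f]` is a strict supergraph of a prison, with the
extra edge being `{f 4, f 2}` or `{f 4, f 3}`. -/
lemma master {G : SimpleGraph V} (B : Set (Sym2 V)) (f : Fin 5 ↪ V)
    (hf : ∀ a b, (G.deleteEdges B).Adj (f a) (f b) ↔ prison.Adj a b) :
    (∀ a b, G.Adj (f a) (f b) ↔ prison.Adj a b) ∨
    ((G.Adj (f 4) (f 2) ∨ G.Adj (f 4) (f 3)) ∧ StrictSupPrison G (Set.range ⇑f)) := by
  have hGof : ∀ a b, prison.Adj a b → G.Adj (f a) (f b) := by
    intro a b hp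
    have := (hf a b).mpr hp
    rw [SimpleGraph.deleteEdges_adj] at this
    exact this.1
  have hnon : ∀ x y, x ∈ Set.range ⇑f → y ∈ Set.range ⇑f → x ≠ y → ¬ G.Adj x y →
      ∃ a b : Fin 5, f a = x ∧ f b = y ∧
        ((a = 4 ∧ b = 2) ∨ (a = 4 ∧ b = 3) ∨ (a = 2 ∧ b = 4) ∨ (a = 3 ∧ b = 4)) := by
    rintro x y ⟨a, rfl⟩ ⟨b, rfl⟩ hxy hnadj
    have hab : a ≠ b := fun h => hxy (by rw [h])
    have hpn : ¬ prison.Adj a b := fun hp => hnadj (hGof a b hp)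
    exact ⟨a, b, rfl, rfl, prison_nonadj hab hpn⟩
  by_cases h2 : G.Adj (f 4) (f 2)
  · refine Or.inr ⟨Or.inl h2, range_ncard f, f 4, f 3, ?_⟩
    intro x hx y hy hxy hnadj
    obtain ⟨a, b, rfl, rfl, hcases⟩ := hnon x y hx hy hxy hnadj
    rcases hcases with ⟨ha, hb⟩ | ⟨ha, hb⟩ | ⟨ha, hb⟩ | ⟨ha, hb⟩ <;> subst ha <;> subst hb
    · exact absurd h2 hnadj
    · exact Or.inl ⟨rfl, rfl⟩
    · exact absurd h2.symm hnadj
    · exact Or.inr ⟨rfl, rfl⟩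
  · by_cases h3 : G.Adj (f 4) (f 3)
    · refine Or.inr ⟨Or.inr h3, range_ncard f, f 4, f 2, ?_⟩
      intro x hx y hy hxy hnadj
      obtain ⟨a, b, rfl, rfl, hcases⟩ := hnon x y hx hy hxy hnadj
      rcases hcases with ⟨ha, hb⟩ | ⟨ha, hb⟩ | ⟨ha, hb⟩ | ⟨ha, hb⟩ <;> subst ha <;> subst hb
      · exact Or.inl ⟨rfl, rfl⟩
      · exact absurd h3 hnadj
      · exact Or.inr ⟨rfl, rfl⟩
      · exact absurd h3.symm hnadj
    · refine Or.inl fun a b => ⟨fun hG => ?_, hGof a b⟩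
      have hab : a ≠ b := fun h => G.ne_of_adj hG (by rw [h])
      by_contra hpn
      rcases prison_nonadj hab hpn with ⟨ha, hb⟩ | ⟨ha, hb⟩ | ⟨ha, hb⟩ | ⟨ha, hb⟩ <;>
        subst ha <;> subst hb
      · exact h2 hG
      · exact h3 hG
      · exact h2 hG.symm
      · exact h3 hG.symm

/-- Transfer of prison-freeness to the modulator-induced graph, given that the
deleted edge `uv` does not lie within `S`. -/
lemma mod_free (G : SimpleGraph V) (S : Set V) (u v : V)
    (hnotS : ¬ (u ∈ S ∧ v ∈ S)) (A' : Set (Sym2 V))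
    (h : PrisonFree ((G.deleteEdges {s(u, v)}).deleteEdges A')) :
    PrisonFree ((inducedOn G S).deleteEdges A') := by
  rintro ⟨P, f, hrange, hf⟩
  have hadj_iff : ∀ x y, ((inducedOn G S).deleteEdges A').Adj x y ↔
      (G.Adj x y ∧ x ∈ S ∧ y ∈ S) ∧ s(x, y) ∉ A' := by
    intro x y
    rw [SimpleGraph.deleteEdges_adj]
    exact Iff.rfl
  have hS : ∀ a : Fin 5, f a ∈ S := by
    intro a
    obtain ⟨b, hb⟩ := prison_exists_adj a
    have := (hf a b).mpr hb
    rw [hadj_iff] at this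
    exact this.1.2.1
  refine h ⟨P, f, hrange, fun a b => ?_⟩
  rw [← hf a b, hadj_iff, SimpleGraph.deleteEdges_adj, SimpleGraph.deleteEdges_adj]
  constructor
  · rintro ⟨⟨hG, _⟩, hA⟩
    exact ⟨⟨hG, hS a, hS b⟩, hA⟩
  · rintro ⟨⟨hG, _, _⟩, hA⟩
    refine ⟨⟨hG, ?_⟩, hA⟩
    intro hmem
    rw [Set.mem_singleton_iff, Sym2.eq_iff] at hmem
    rcases hmem with ⟨h1, h2⟩ | ⟨h1, h2⟩
    · exact hnotS ⟨h1 ▸ hS a, h2 ▸ hS b⟩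
    · exact hnotS ⟨h2 ▸ hS b, h1 ▸ hS a⟩

end Aux

/-- Safeness of Reduction Rule 1: if `S` is a good modulator and
`uv` is an edge of `G` not having both endpoints in `S` and contained in no strict
supergraph of a prison, then `(G,k)` and `(G − uv, k)` are equivalent instances of
Prison-Free Edge Deletion. -/
theorem rule_notSuperEdge_safe {V : Type*} [Fintype V] (G : SimpleGraph V)
    (k : ℕ) (S : Set V) (hS : GoodModulator G k S)
    (u v : V) (huv : G.Adj u v) (hnotS : ¬ (u ∈ S ∧ v ∈ S))
    (hno : ¬ ∃ P : Set V, StrictSupPrison G P ∧ u ∈ P ∧ v ∈ P) :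
    DeletionYes G k ↔ DeletionYes (G.deleteEdges {s(u, v)}) k := by
  constructor
  · -- forward direction: delete `A \ {uv}` from `G − uv`
    rintro ⟨A, hAsub, hAfin, hAcard, hAfree⟩
    refine ⟨A \ {s(u, v)}, ?_, hAfin.diff, le_trans (Set.ncard_le_ncard
      Set.diff_subset hAfin) hAcard, ?_⟩
    · intro x hx
      rw [SimpleGraph.edgeSet_deleteEdges]
      exact ⟨hAsub hx.1, hx.2⟩
    · rintro ⟨P, f, hrange, hf⟩
      have hf' : ∀ a b, ((G.deleteEdges A).deleteEdges {s(u, v)}).Adj (f a) (f b) ↔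
          prison.Adj a b := by
        intro a b
        rw [← hf a b]
        simp only [SimpleGraph.deleteEdges_adj, Set.mem_diff, Set.mem_singleton_iff]
        tauto
      rcases master {s(u, v)} f hf' with hcase | ⟨hadj, hstrict⟩
      · exact hAfree ⟨Set.range ⇑f, f, rfl, hcase⟩
      · -- the extra edge must be `uv`, so `u, v ∈ range f`
        have key : ∀ c : Fin 5, ¬ prison.Adj 4 c → (G.deleteEdges A).Adj (f 4) (f c) →
            u ∈ Set.range ⇑f ∧ v ∈ Set.range ⇑f := by
          intro c hpc hGAc
          have hn : ¬ ((G.deleteEdges A).deleteEdges {s(u, v)}).Adj (f 4) (f c) :=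
            fun hc => hpc ((hf' 4 c).mp hc)
          have hmem : s(f 4, f c) = s(u, v) := by
            by_contra hne
            exact hn (by rw [SimpleGraph.deleteEdges_adj]; exact ⟨hGAc, by simpa using hne⟩)
          rw [Sym2.eq_iff] at hmem
          rcases hmem with ⟨h1, h2⟩ | ⟨h1, h2⟩
          · exact ⟨⟨4, h1⟩, ⟨c, h2⟩⟩
          · exact ⟨⟨c, h2⟩, ⟨4, h1⟩⟩
        have huvP : u ∈ Set.range ⇑f ∧ v ∈ Set.range ⇑f := by
          rcases hadj with h42 | h43
          · exact key 2 prison_not_adj_42 h42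
          · exact key 3 prison_not_adj_43 h43
        exact hno ⟨Set.range ⇑f, strictSup_mono hstrict, huvP.1, huvP.2⟩
  · -- backward direction: `A'` itself works for `G`
    rintro ⟨A', hsub, hfin, hcard, hfree⟩
    have hsubG : A' ⊆ G.edgeSet := by
      intro x hx
      have := hsub hx
      rw [SimpleGraph.edgeSet_deleteEdges] at this
      exact this.1
    refine ⟨A', hsubG, hfin, hcard, ?_⟩
    rintro ⟨P, f, hrange, hf⟩
    by_cases hP : u ∈ Set.range ⇑f ∧ v ∈ Set.range ⇑f
    · rcases master A' f hf with hcase | ⟨_, hstrict⟩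
      · -- `G[range f]` is a prison: use the good-modulator property
        have hmodfree : PrisonFree ((inducedOn G S).deleteEdges A') :=
          mod_free G S u v hnotS A' hfree
        obtain ⟨e', he'A, he'P⟩ :=
          hS (Set.range ⇑f) ⟨f, rfl, hcase⟩ A' hsubG hfin hcard hmodfree
        revert he'A he'P
        induction e' using Sym2.ind with
        | _ x y =>
          intro he'A he'P
          have hadj : (inducedOn G (Set.range ⇑f)).Adj x y :=
            (SimpleGraph.mem_edgeSet _).mp he'P
          obtain ⟨hGxy, hx, hy⟩ := hadj
          obtain ⟨a, rfl⟩ := hx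
          obtain ⟨b, rfl⟩ := hy
          have hp : prison.Adj a b := (hcase a b).mp hGxy
          have hdel := (hf a b).mpr hp
          rw [SimpleGraph.deleteEdges_adj] at hdel
          exact hdel.2 he'A
      · exact hno ⟨Set.range ⇑f, hstrict, hP.1, hP.2⟩
    · -- `uv` not inside `P`: the prison survives in `(G − uv) − A'`
      refine hfree ⟨Set.range ⇑f, f, rfl, fun a b => ?_⟩
      rw [← hf a b, SimpleGraph.deleteEdges_adj, SimpleGraph.deleteEdges_adj,
        SimpleGraph.deleteEdges_adj]
      constructor
      · rintro ⟨⟨hG, _⟩, hA⟩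
        exact ⟨hG, hA⟩
      · rintro ⟨hG, hA⟩
        refine ⟨⟨hG, ?_⟩, hA⟩
        intro hmem
        rw [Set.mem_singleton_iff, Sym2.eq_iff] at hmem
        rcases hmem with ⟨h1, h2⟩ | ⟨h1, h2⟩
        · exact hP ⟨⟨a, h1⟩, ⟨b, h2⟩⟩
        · exact hP ⟨⟨b, h2⟩, ⟨a, h1⟩⟩

end PrisonFreePaper
end

section
/- Let G be a graph and S⊆V(G) a set satisfying (H1) and (H2). Then for every F ∈ cmd_3(G−S) and every vertex x ∈ (V(G)∖S)∖F, the neighborhood N_G(x) intersects at most one class of F. -/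
namespace PrisonFreePaper

variable {V : Type*}

private lemma mkPrison (G : SimpleGraph V) (v0 v1 v2 v3 v4 : V)
    (h01 : G.Adj v0 v1) (h02 : G.Adj v0 v2) (h03 : G.Adj v0 v3)
    (h12 : G.Adj v1 v2) (h13 : G.Adj v1 v3) (h23 : G.Adj v2 v3)
    (h40 : G.Adj v4 v0) (h41 : G.Adj v4 v1)
    (n42 : ¬ G.Adj v4 v2) (n43 : ¬ G.Adj v4 v3)
    (d42 : v4 ≠ v2) (d43 : v4 ≠ v3) :
    InducesPrison G {v0, v1, v2, v3, v4} := by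
  have h10 := h01.symm; have h20 := h02.symm; have h30 := h03.symm
  have h21 := h12.symm; have h31 := h13.symm; have h32 := h23.symm
  have h04 := h40.symm; have h14 := h41.symm
  have n24 : ¬ G.Adj v2 v4 := fun h => n42 h.symm
  have n34 : ¬ G.Adj v3 v4 := fun h => n43 h.symm
  have d01 := h01.ne; have d02 := h02.ne; have d03 := h03.ne
  have d12 := h12.ne; have d13 := h13.ne; have d23 := h23.ne
  have d40 := h40.ne; have d41 := h41.ne
  have irr : ∀ w : V, ¬ G.Adj w w := fun w => G.irrefl
  refine ⟨⟨![v0, v1, v2, v3, v4], ?_⟩, ?_, ?_⟩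
  · intro a b hab
    fin_cases a <;> fin_cases b <;> simp_all
  · ext y
    constructor
    · rintro ⟨i, rfl⟩
      fin_cases i <;> simp <;> first | exact Or.inl rfl | exact Or.inr (Or.inl rfl) | exact Or.inr (Or.inr (Or.inl rfl)) | exact Or.inr (Or.inr (Or.inr (Or.inl rfl))) | exact Or.inr (Or.inr (Or.inr (Or.inr rfl)))
    · intro hy
      rcases hy with rfl | rfl | rfl | rfl | rfl
      · exact ⟨0, rfl⟩
      · exact ⟨1, rfl⟩
      · exact ⟨2, rfl⟩
      · exact ⟨3, rfl⟩
      · exact ⟨4, rfl⟩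
  · intro a b
    fin_cases a <;> fin_cases b <;>
      simp_all [prison, Fin.ext_iff] <;> tauto

private lemma no_prison_three (G : SimpleGraph V) (S : Set V)
    (h2 : H2 G S) (P : Set V) (hP : InducesPrison G P)
    (a b c : V) (ha : a ∈ P) (hb : b ∈ P) (hc : c ∈ P)
    (hab : a ≠ b) (hac : a ≠ c) (hbc : b ≠ c)
    (haS : a ∉ S) (hbS : b ∉ S) (hcS : c ∉ S) : False := by
  obtain ⟨e₁, e₂, hne, he₁, he₂⟩ := h2 P hP
  induction e₁ using Sym2.ind with | _ p₁ q₁ =>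
  induction e₂ using Sym2.ind with | _ p₂ q₂ =>
  rw [edgesWithin, SimpleGraph.mem_edgeSet] at he₁ he₂
  obtain ⟨hadj₁, hp₁, hq₁⟩ := he₁
  obtain ⟨hadj₂, hp₂, hq₂⟩ := he₂
  have hpick : ∃ r, (r = p₂ ∨ r = q₂) ∧ r ≠ p₁ ∧ r ≠ q₁ := by
    by_cases h1 : p₂ ≠ p₁ ∧ p₂ ≠ q₁
    · exact ⟨p₂, Or.inl rfl, h1⟩
    · by_cases h2' : q₂ ≠ p₁ ∧ q₂ ≠ q₁
      · exact ⟨q₂, Or.inr rfl, h2'⟩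
      · exfalso
        push_neg at h1 h2'
        have hpq₂ : p₂ ≠ q₂ := hadj₂.ne
        apply hne
        rw [Sym2.eq_iff]
        by_cases hp : p₂ = p₁
        · have hq : q₂ ≠ p₁ := fun h => hpq₂ (hp.trans h.symm)
          exact Or.inl ⟨hp.symm, (h2' hq).symm⟩
        · have hp' := h1 hp
          by_cases hq : q₂ = p₁
          · exact Or.inr ⟨hq.symm, hp'.symm⟩
          · exact absurd (hp'.trans (h2' hq).symm) hpq₂
  obtain ⟨r, hr2, hrp₁, hrq₁⟩ := hpick
  have hrPS : r ∈ P ∩ S := by rcases hr2 with rfl | rfl <;> assumption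
  obtain ⟨f, hrange, hiff⟩ := hP
  have hmem : ∀ y ∈ P, ∃ i, f i = y := by
    rw [← hrange]; rintro y ⟨i, rfl⟩; exact ⟨i, rfl⟩
  have hwP : ∀ i : Fin 6, ∃ j, f j = ![a, b, c, p₁, q₁, r] i := by
    intro i
    fin_cases i
    · exact hmem a ha
    · exact hmem b hb
    · exact hmem c hc
    · exact hmem p₁ hp₁.1
    · exact hmem q₁ hq₁.1
    · exact hmem r hrPS.1
  choose g hg using hwP
  obtain ⟨i, j, hij, hgij⟩ := Fintype.exists_ne_map_eq_of_card_lt g (by simp)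
  have hwij : ![a, b, c, p₁, q₁, r] i = ![a, b, c, p₁, q₁, r] j := by
    rw [← hg i, ← hg j, hgij]
  have hap : a ≠ p₁ := fun h => haS (h ▸ hp₁.2)
  have haq : a ≠ q₁ := fun h => haS (h ▸ hq₁.2)
  have har : a ≠ r := fun h => haS (h ▸ hrPS.2)
  have hbp : b ≠ p₁ := fun h => hbS (h ▸ hp₁.2)
  have hbq : b ≠ q₁ := fun h => hbS (h ▸ hq₁.2)
  have hbr : b ≠ r := fun h => hbS (h ▸ hrPS.2)
  have hcp : c ≠ p₁ := fun h => hcS (h ▸ hp₁.2)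
  have hcq : c ≠ q₁ := fun h => hcS (h ▸ hq₁.2)
  have hcr : c ≠ r := fun h => hcS (h ▸ hrPS.2)
  have hpq : p₁ ≠ q₁ := hadj₁.ne
  fin_cases i <;> fin_cases j <;>
    first
      | exact hij rfl
      | exact hab hwij | exact hab hwij.symm
      | exact hac hwij | exact hac hwij.symm
      | exact hbc hwij | exact hbc hwij.symm
      | exact hap hwij | exact hap hwij.symm
      | exact haq hwij | exact haq hwij.symm
      | exact har hwij | exact har hwij.symm
      | exact hbp hwij | exact hbp hwij.symm
      | exact hbq hwij | exact hbq hwij.symm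
      | exact hbr hwij | exact hbr hwij.symm
      | exact hcp hwij | exact hcp hwij.symm
      | exact hcq hwij | exact hcq hwij.symm
      | exact hcr hwij | exact hcr hwij.symm
      | exact hpq hwij | exact hpq hwij.symm
      | exact hrp₁ hwij | exact hrp₁ hwij.symm
      | exact hrq₁ hwij | exact hrq₁ hwij.symm

private lemma isCMP_subset {G : SimpleGraph V} {F : Set V} {P P' : Set (Set V)}
    (h : IsCMP G F P) (h' : IsCMP G F P') : P ⊆ P' := by
  intro K hK
  obtain ⟨hne, hKF⟩ := h.1 K hK
  obtain ⟨a, haK⟩ := hne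
  have haF : a ∈ F := hKF haK
  have : a ∈ ⋃₀ P' := by rw [h'.2.1]; exact haF
  obtain ⟨L, hL, haL⟩ := this
  suffices hKL : K = L by rwa [hKL]
  ext b
  constructor
  · intro hbK
    by_cases hba : b = a
    · exact hba ▸ haL
    · have hbF : b ∈ F := hKF hbK
      have hnadj : ¬ G.Adj a b :=
        fun hadj => (h.2.2.2 a haF b hbF).mp hadj ⟨K, hK, haK, hbK⟩
      have hex : ∃ M ∈ P', a ∈ M ∧ b ∈ M := by
        by_contra hno
        exact hnadj ((h'.2.2.2 a haF b hbF).mpr hno)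
      obtain ⟨M, hM, haM, hbM⟩ := hex
      have hML : M = L := by
        by_contra hne'
        exact Set.disjoint_left.mp (h'.2.2.1 M hM L hL hne') haM haL
      exact hML ▸ hbM
  · intro hbL
    by_cases hba : b = a
    · exact hba ▸ haK
    · have hbF : b ∈ F := (h'.1 L hL).2 hbL
      have hnadj : ¬ G.Adj a b :=
        fun hadj => (h'.2.2.2 a haF b hbF).mp hadj ⟨L, hL, haL, hbL⟩
      have hex : ∃ M ∈ P, a ∈ M ∧ b ∈ M := by
        by_contra hno
        exact hnadj ((h.2.2.2 a haF b hbF).mpr hno)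
      obtain ⟨M, hM, haM, hbM⟩ := hex
      have hMK : M = K := by
        by_contra hne'
        exact Set.disjoint_left.mp (h.2.2.1 M hM K hK hne') haM haK
      exact hMK ▸ hbM

/-- Under (H1) and (H2), for every `F ∈ cmd₃(G−S)` and every
vertex `x ∉ S` with `x ∉ F`, the neighbourhood of `x` in `G` intersects at most
one class of `F`. -/
theorem superprisonfree {V : Type*} [Fintype V] (G : SimpleGraph V)
    (S : Set V) (h1 : H1 G S) (h2 : H2 G S) :
    ∀ F : Set V, Cmd G Sᶜ 3 F → ∀ x : V, x ∉ S → x ∉ F →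
      ∀ P : Set (Set V), IsCMP G F P → MeetsAtMostOneClass G P x := by
  intro F hCmd x hxS hxF P hP C hC D hD hC' hD'
  obtain ⟨u, huC, hxu⟩ := hC'
  obtain ⟨v, hvD, hxv⟩ := hD'
  by_contra hCD
  have hDC : D ≠ C := fun h => hCD h.symm
  obtain ⟨hFW, hCMP3, hmax⟩ := hCmd
  obtain ⟨hcls, hunion, hdisj, hadj⟩ := id hP
  -- basic helpers
  have memF : ∀ {K a}, K ∈ P → a ∈ K → a ∈ F := fun hK ha => (hcls _ hK).2 ha
  have classEq : ∀ {K L a}, K ∈ P → L ∈ P → a ∈ K → a ∈ L → K = L := by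
    intro K L a hK hL haK haL
    by_contra h
    exact Set.disjoint_left.mp (hdisj K hK L hL h) haK haL
  have adj_ne : ∀ {K L a b}, K ∈ P → L ∈ P → a ∈ K → b ∈ L → K ≠ L → G.Adj a b := by
    intro K L a b hK hL ha hb hne
    refine (hadj a (memF hK ha) b (memF hL hb)).mpr ?_
    rintro ⟨M, hM, haM, hbM⟩
    exact hne ((classEq hK hM ha haM).trans (classEq hL hM hb hbM).symm)
  have nadj_same : ∀ {K a b}, K ∈ P → a ∈ K → b ∈ K → ¬ G.Adj a b := by
    intro K a b hK ha hb hadj'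
    exact (hadj a (memF hK ha) b (memF hK hb)).mp hadj' ⟨K, hK, ha, hb⟩
  have classOf : ∀ y, y ∈ F → ∃ K, K ∈ P ∧ y ∈ K := by
    intro y hy
    have hy' : y ∈ ⋃₀ P := hunion.symm ▸ hy
    obtain ⟨K, hK, hyK⟩ := hy'
    exact ⟨K, hK, hyK⟩
  have hFS : ∀ y, y ∈ F → y ∉ S := fun y hy => hFW hy
  have huF : u ∈ F := memF hC huC
  have hvF : v ∈ F := memF hD hvD
  -- maximality killer
  have hmaxkill : CMPAtLeast G (insert x F) 3 → False := by
    intro hC3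
    have hsub' : insert x F ⊆ Sᶜ := Set.insert_subset (by simpa using hxS) hFW
    have heq := hmax (insert x F) hsub' (Set.subset_insert x F) hC3
    exact hxF (heq ▸ Set.mem_insert x F)
  -- three distinct classes of P
  obtain ⟨P₀, hP₀, f3, hf3⟩ := hCMP3
  have hsubP : P₀ ⊆ P := isCMP_subset hP₀ hP
  have htri : ∀ i : Fin 3, f3 i ∈ P := fun i => hsubP (hf3 i)
  have hinj01 : f3 0 ≠ f3 1 := f3.injective.ne (by decide)
  have hinj02 : f3 0 ≠ f3 2 := f3.injective.ne (by decide)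
  have hinj12 : f3 1 ≠ f3 2 := f3.injective.ne (by decide)
  by_cases hall : ∀ y ∈ F, G.Adj x y
  -- ================== Case (c): x adjacent to all of F ==================
  · apply hmaxkill
    have hxmem : ∀ K, K ∈ P → x ∉ K := fun K hK h => hxF (memF hK h)
    have hCx : C ≠ {x} := by
      intro h
      rw [h] at huC
      have : u = x := huC
      exact hxF (this ▸ huF)
    have hDx : D ≠ {x} := by
      intro h
      rw [h] at hvD
      have : v = x := hvD
      exact hxF (this ▸ hvF)
    have hxside : ∀ b ∈ F, (G.Adj x b ↔ ¬∃ K ∈ insert {x} P, x ∈ K ∧ b ∈ K) := by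
      intro b hbF
      refine iff_of_true (hall b hbF) ?_
      rintro ⟨K, hK, hxK, hbK⟩
      rcases Set.mem_insert_iff.mp hK with rfl | hK'
      · exact hxF ((show b = x from hbK) ▸ hbF)
      · exact hxmem K hK' hxK
    refine ⟨insert {x} P, ⟨?_, ?_, ?_, ?_⟩, ⟨![C, D, {x}], ?_⟩, ?_⟩
    · intro K hK
      rcases Set.mem_insert_iff.mp hK with rfl | hK'
      · exact ⟨⟨x, rfl⟩, Set.singleton_subset_iff.mpr (Set.mem_insert x F)⟩
      · exact ⟨(hcls K hK').1, (hcls K hK').2.trans (Set.subset_insert x F)⟩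
    · rw [Set.sUnion_insert, hunion, Set.singleton_union]
    · intro K hK L hL hKL
      rcases Set.mem_insert_iff.mp hK with rfl | hK' <;>
        rcases Set.mem_insert_iff.mp hL with rfl | hL'
      · exact absurd rfl hKL
      · exact Set.disjoint_singleton_left.mpr (hxmem L hL')
      · exact Set.disjoint_singleton_right.mpr (hxmem K hK')
      · exact hdisj K hK' L hL' hKL
    · intro a ha b hb
      rcases Set.mem_insert_iff.mp ha with hax | haF
      · rcases Set.mem_insert_iff.mp hb with hbx | hbF
        · rw [hax, hbx]
          exact iff_of_false (G.irrefl)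
            (fun h => h ⟨{x}, Set.mem_insert _ _, rfl, rfl⟩)
        · rw [hax]
          exact hxside b hbF
      · rcases Set.mem_insert_iff.mp hb with hbx | hbF
        · rw [hbx]
          constructor
          · rintro h ⟨K, hK, haK, hbK⟩
            exact (hxside a haF).mp h.symm ⟨K, hK, hbK, haK⟩
          · intro h
            refine ((hxside a haF).mpr ?_).symm
            rintro ⟨K, hK, hxK, haK⟩
            exact h ⟨K, hK, haK, hxK⟩
        · rw [hadj a haF b hbF]
          apply not_congr
          constructor
          · rintro ⟨K, hK, ha1, hb1⟩
            exact ⟨K, Set.mem_insert_of_mem _ hK, ha1, hb1⟩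
          · rintro ⟨K, hK, ha1, hb1⟩
            rcases Set.mem_insert_iff.mp hK with rfl | hK'
            · exact absurd ((show a = x from ha1) ▸ haF) hxF
            · exact ⟨K, hK', ha1, hb1⟩
    · intro i j hij
      fin_cases i <;> fin_cases j <;>
        simp only [Matrix.cons_val_zero, Matrix.cons_val_one, Matrix.head_cons,
          Matrix.cons_val_two, Matrix.tail_cons, Fin.mk_zero, Fin.mk_one] at hij ⊢ <;>
        first
          | rfl
          | exact absurd hij hCD | exact absurd hij hDC
          | exact absurd hij hCx | exact absurd hij hCx.symm
          | exact absurd hij hDx | exact absurd hij hDx.symm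
    · intro i
      fin_cases i
      · exact Set.mem_insert_of_mem _ hC
      · exact Set.mem_insert_of_mem _ hD
      · exact Set.mem_insert _ _
  -- ================== x has a non-neighbour in F ==================
  · push_neg at hall
    obtain ⟨w₀, hw₀F, hxw₀⟩ := hall
    by_cases hmix : ∃ M ∈ P, (∃ um ∈ M, G.Adj x um) ∧ (∃ wm ∈ M, ¬ G.Adj x wm)
    -- ============ mixed class exists ============
    · obtain ⟨M, hM, ⟨um, hum, hxum⟩, ⟨wm, hwm, hxwm⟩⟩ := hmix
      obtain ⟨D', hD'P, hD'M, v', hv'D, hxv'⟩ :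
          ∃ D'' ∈ P, D'' ≠ M ∧ ∃ v'' ∈ D'', G.Adj x v'' := by
        by_cases hCM : C = M
        · exact ⟨D, hD, fun h => hCD (hCM.trans h.symm), v, hvD, hxv⟩
        · exact ⟨C, hC, hCM, u, huC, hxu⟩
      have humF : um ∈ F := memF hM hum
      have hwmF : wm ∈ F := memF hM hwm
      have hv'F : v' ∈ F := memF hD'P hv'D
      have hnuw : ¬ G.Adj um wm := nadj_same hM hum hwm
      have hvw : G.Adj v' wm := adj_ne hD'P hM hv'D hwm hD'M
      have huv : G.Adj um v' := adj_ne hM hD'P hum hv'D hD'M.symm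
      have hwmx : wm ≠ x := fun h => hxF (h ▸ hwmF)
      have hwmum : wm ≠ um := fun h => hxwm (by rw [h]; exact hxum)
      by_cases hz : ∃ z, z ∈ F ∧ ¬ G.Adj x z ∧ z ∉ M ∧ z ∉ D'
      -- ======== HARD CASE: use H1 ========
      · obtain ⟨z, hzF, hxz, hzM, hzD'⟩ := hz
        obtain ⟨Ez, hEz, hzEz⟩ := classOf z hzF
        have hEzM : Ez ≠ M := fun h => hzM (h ▸ hzEz)
        have hEzD' : Ez ≠ D' := fun h => hzD' (h ▸ hzEz)
        have huz : G.Adj um z := adj_ne hM hEz hum hzEz hEzM.symm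
        have hvz : G.Adj v' z := adj_ne hD'P hEz hv'D hzEz hEzD'.symm
        have hwz : G.Adj wm z := adj_ne hM hEz hwm hzEz hEzM.symm
        have hzx : z ≠ x := fun h => hxF (h ▸ hzF)
        obtain ⟨Q, hQs, hxQ, huQ⟩ := h1 x um hxum (fun h => hxS h.1)
        obtain ⟨hQ5, p, q, hQprop⟩ := hQs
        obtain ⟨r, hr⟩ : ∃ r, ((p ∈ Q ∧ p ≠ x ∧ p ≠ um) → r = p) ∧
            ((¬(p ∈ Q ∧ p ≠ x ∧ p ≠ um) ∧ (q ∈ Q ∧ q ≠ x ∧ q ≠ um)) → r = q) := by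
          by_cases hp' : p ∈ Q ∧ p ≠ x ∧ p ≠ um
          · exact ⟨p, fun _ => rfl, fun h => absurd hp' h.1⟩
          · by_cases hq' : q ∈ Q ∧ q ≠ x ∧ q ≠ um
            · exact ⟨q, fun h => absurd h hp', fun _ => rfl⟩
            · exact ⟨x, fun h => absurd h hp', fun h => absurd h.2 hq'⟩
        have h3card : ({x, um, r} : Set V).ncard ≤ 3 := by
          calc ({x, um, r} : Set V).ncard ≤ ({um, r} : Set V).ncard + 1 :=
                Set.ncard_insert_le _ _
            _ ≤ (({r} : Set V).ncard + 1) + 1 :=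
                Nat.add_le_add_right (Set.ncard_insert_le _ _) 1
            _ = 3 := by rw [Set.ncard_singleton]
        have h5le := Set.ncard_le_ncard_diff_add_ncard Q {x, um, r}
        have h2le : 1 < (Q \ {x, um, r}).ncard := by omega
        obtain ⟨s, hsT, t, htT, hst⟩ := (Set.one_lt_ncard (Set.toFinite _)).mp h2le
        have hsQ : s ∈ Q := hsT.1
        have htQ : t ∈ Q := htT.1
        have hsx : s ≠ x := fun h => hsT.2 (Or.inl h)
        have hsu : s ≠ um := fun h => hsT.2 (Or.inr (Or.inl h))
        have hsr : s ≠ r := fun h => hsT.2 (Or.inr (Or.inr h))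
        have htx : t ≠ x := fun h => htT.2 (Or.inl h)
        have htu : t ≠ um := fun h => htT.2 (Or.inr (Or.inl h))
        have htr : t ≠ r := fun h => htT.2 (Or.inr (Or.inr h))
        have hsp : s ≠ p := by
          intro h
          exact hsr (h.trans (hr.1 ⟨h ▸ hsQ, fun e => hsx (h.trans e),
            fun e => hsu (h.trans e)⟩).symm)
        have htp : t ≠ p := by
          intro h
          exact htr (h.trans (hr.1 ⟨h ▸ htQ, fun e => htx (h.trans e),
            fun e => htu (h.trans e)⟩).symm)
        have hcore : ∀ α β : V, α ∈ Q → β ∈ Q → α ≠ β → ¬ G.Adj α β → α = p → β = q →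
            (α = x ∨ α = um ∨ α = s ∨ α = t) → (β = x ∨ β = um ∨ β = s ∨ β = t) → False := by
          intro α β hαQ hβQ hαβ hnadj hαp hβq hα4 hβ4
          have hp4 : p = x ∨ p = um ∨ p = s ∨ p = t := hαp ▸ hα4
          have hq4 : q = x ∨ q = um ∨ q = s ∨ q = t := hβq ▸ hβ4
          have hnadj' : ¬ G.Adj p q := hαp ▸ hβq ▸ hnadj
          have hαβ' : p ≠ q := hαp ▸ hβq ▸ hαβ
          have hqQ : q ∈ Q := hβq ▸ hβQ
          have hpxu : p = x ∨ p = um := by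
            rcases hp4 with h | h | h | h
            · exact Or.inl h
            · exact Or.inr h
            · exact absurd h.symm hsp
            · exact absurd h.symm htp
          have hp'false : ¬(p ∈ Q ∧ p ≠ x ∧ p ≠ um) := by
            rintro ⟨_, h1', h2'⟩
            rcases hpxu with h | h
            · exact h1' h
            · exact h2' h
          have hqxu : q = x ∨ q = um := by
            rcases hq4 with h | h | h | h
            · exact Or.inl h
            · exact Or.inr h
            · exfalso
              have hrq : r = q := hr.2 ⟨hp'false, hqQ, fun e => hsx (h.symm.trans e),
                fun e => hsu (h.symm.trans e)⟩
              exact hsr (h.symm.trans hrq.symm)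
            · exfalso
              have hrq : r = q := hr.2 ⟨hp'false, hqQ, fun e => htx (h.symm.trans e),
                fun e => htu (h.symm.trans e)⟩
              exact htr (h.symm.trans hrq.symm)
          rcases hpxu with h | h <;> rcases hqxu with h' | h'
          · exact hαβ' (h.trans h'.symm)
          · exact hnadj' (by rw [h, h']; exact hxum)
          · exact hnadj' (by rw [h, h']; exact hxum.symm)
          · exact hαβ' (h.trans h'.symm)
        have cliqueQ : ∀ α β : V, α ∈ Q → β ∈ Q → α ≠ β →
            (α = x ∨ α = um ∨ α = s ∨ α = t) → (β = x ∨ β = um ∨ β = s ∨ β = t) →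
            G.Adj α β := by
          intro α β hαQ hβQ hαβ hα4 hβ4
          by_contra hnadj
          rcases hQprop α hαQ β hβQ hαβ hnadj with ⟨hα, hβ⟩ | ⟨hα, hβ⟩
          · exact hcore α β hαQ hβQ hαβ hnadj hα hβ hα4 hβ4
          · exact hcore β α hβQ hαQ hαβ.symm (fun h => hnadj h.symm) hβ hα hβ4 hα4
        have hxs : G.Adj x s := cliqueQ x s hxQ hsQ hsx.symm (Or.inl rfl) (Or.inr (Or.inr (Or.inl rfl)))
        have hxt : G.Adj x t := cliqueQ x t hxQ htQ htx.symm (Or.inl rfl) (Or.inr (Or.inr (Or.inr rfl)))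
        have hus : G.Adj um s := cliqueQ um s huQ hsQ hsu.symm (Or.inr (Or.inl rfl)) (Or.inr (Or.inr (Or.inl rfl)))
        have hut : G.Adj um t := cliqueQ um t huQ htQ htu.symm (Or.inr (Or.inl rfl)) (Or.inr (Or.inr (Or.inr rfl)))
        have hstAdj : G.Adj s t := cliqueQ s t hsQ htQ hst (Or.inr (Or.inr (Or.inl rfl))) (Or.inr (Or.inr (Or.inr rfl)))
        -- find a common neighbour s₁ of x, um, v'
        have hs₁ : (∃ s₁, G.Adj x s₁ ∧ G.Adj um s₁ ∧ G.Adj v' s₁ ∧ s₁ ≠ x ∧ s₁ ≠ um ∧ s₁ ≠ v') ∨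
            (¬ G.Adj v' s ∧ ¬ G.Adj v' t ∧ v' ≠ s ∧ v' ≠ t) := by
          by_cases hvs : v' = s
          · exact Or.inl ⟨t, hxt, hut, by rw [hvs]; exact hstAdj, htx, htu,
              fun h => hst ((h.trans hvs).symm)⟩
          · by_cases hvt : v' = t
            · exact Or.inl ⟨s, hxs, hus, by rw [hvt]; exact hstAdj.symm, hsx, hsu,
                fun h => hst (h.trans hvt)⟩
            · by_cases hvsA : G.Adj v' s
              · exact Or.inl ⟨s, hxs, hus, hvsA, hsx, hsu, fun h => hvs h.symm⟩
              · by_cases hvtA : G.Adj v' t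
                · exact Or.inl ⟨t, hxt, hut, hvtA, htx, htu, fun h => hvt h.symm⟩
                · exact Or.inr ⟨hvsA, hvtA, hvs, hvt⟩
        rcases hs₁ with ⟨s₁, hs₁x, hs₁u, hs₁v, hs₁nx, hs₁nu, hs₁nv⟩ | ⟨hnvs, hnvt, hvns, hvnt⟩
        · by_cases hws₁ : G.Adj wm s₁
          · -- prison {v', s₁, x, um, wm}
            have hpr := mkPrison G v' s₁ x um wm hs₁v hxv'.symm huv.symm
              hs₁x.symm hs₁u.symm hxum (hvw.symm) hws₁
              (fun h => hxwm h.symm) (fun h => hnuw h.symm) hwmx hwmum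
            exact no_prison_three G S h2 _ hpr x um v'
              (by simp) (by simp) (by simp)
              hxum.ne hxv'.ne huv.ne hxS (hFS um humF) (hFS v' hv'F)
          · by_cases hzs₁ : G.Adj z s₁
            · -- prison {v', z, um, s₁, wm}
              have hwms₁ : wm ≠ s₁ := fun h => hxwm (by rw [h]; exact hs₁x)
              have hpr := mkPrison G v' z um s₁ wm hvz huv.symm hs₁v
                huz.symm hzs₁ hs₁u hvw.symm hwz
                (fun h => hnuw h.symm) hws₁ hwmum hwms₁
              exact no_prison_three G S h2 _ hpr v' z um
                (by simp) (by simp) (by simp)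
                hvz.ne huv.ne' huz.ne'
                (hFS v' hv'F) (hFS z hzF) (hFS um humF)
            · -- prison {um, v', x, s₁, z}
              have hzs₁' : z ≠ s₁ := fun h => hxz (by rw [h]; exact hs₁x)
              have hpr := mkPrison G um v' x s₁ z huv hxum.symm hs₁u
                hxv'.symm hs₁v hs₁x huz.symm hvz.symm
                (fun h => hxz h.symm) hzs₁ hzx hzs₁'
              exact no_prison_three G S h2 _ hpr um v' x
                (by simp) (by simp) (by simp)
                huv.ne hxum.ne' hxv'.ne' (hFS um humF) (hFS v' hv'F) hxS
        · -- prison {x, um, s, t, v'}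
          have hpr := mkPrison G x um s t v' hxum hxs hxt hus hut hstAdj
            hxv'.symm huv.symm hnvs hnvt hvns hvnt
          exact no_prison_three G S h2 _ hpr x um v'
            (by simp) (by simp) (by simp)
            hxum.ne hxv'.ne huv.ne hxS (hFS um humF) (hFS v' hv'F)
      -- ======== no such z : case (a) ========
      · obtain ⟨K, hKP, hKM, hKD⟩ : ∃ K ∈ P, K ≠ M ∧ K ≠ D' := by
          by_cases hA : f3 0 = M ∨ f3 0 = D'
          · by_cases hB : f3 1 = M ∨ f3 1 = D'
            · refine ⟨f3 2, htri 2, fun h => ?_, fun h => ?_⟩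
              · rcases hA with h0 | h0
                · exact hinj02 (h0.trans h.symm)
                · rcases hB with h1 | h1
                  · exact hinj12 (h1.trans h.symm)
                  · exact hinj01 (h0.trans h1.symm)
              · rcases hA with h0 | h0
                · rcases hB with h1 | h1
                  · exact hinj01 (h0.trans h1.symm)
                  · exact hinj12 (h1.trans h.symm)
                · exact hinj02 (h0.trans h.symm)
            · exact ⟨f3 1, htri 1, fun h => hB (Or.inl h), fun h => hB (Or.inr h)⟩
          · exact ⟨f3 0, htri 0, fun h => hA (Or.inl h), fun h => hA (Or.inr h)⟩
        obtain ⟨u3, hu3K⟩ := (hcls K hKP).1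
        have hu3F : u3 ∈ F := memF hKP hu3K
        have hu3M : u3 ∉ M := fun h => hKM (classEq hKP hM hu3K h)
        have hu3D : u3 ∉ D' := fun h => hKD (classEq hKP hD'P hu3K h)
        have hxu3 : G.Adj x u3 := by
          by_contra hn
          exact hz ⟨u3, hu3F, hn, hu3M, hu3D⟩
        -- prison {v', u3, x, um, wm}
        have hpr := mkPrison G v' u3 x um wm
          (adj_ne hD'P hKP hv'D hu3K hKD.symm) hxv'.symm huv.symm
          hxu3.symm (adj_ne hKP hM hu3K hum hKM) hxum
          hvw.symm (adj_ne hM hKP hwm hu3K hKM.symm)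
          (fun h => hxwm h.symm) (fun h => hnuw h.symm) hwmx hwmum
        exact no_prison_three G S h2 _ hpr v' u3 x
          (by simp) (by simp) (by simp)
          (adj_ne hD'P hKP hv'D hu3K hKD.symm).ne hxv'.ne' hxu3.ne'
          (hFS v' hv'F) (hFS u3 hu3F) hxS
    -- ============ no mixed class ============
    · obtain ⟨E₀, hE₀P, hw₀E⟩ := classOf w₀ hw₀F
      have hEpure : ∀ y ∈ E₀, ¬ G.Adj x y := by
        intro y hy hadj'
        exact hmix ⟨E₀, hE₀P, ⟨y, hy, hadj'⟩, ⟨w₀, hw₀E, hxw₀⟩⟩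
      have hCE₀ : C ≠ E₀ := fun h => hEpure u (h ▸ huC) hxu
      have hDE₀ : D ≠ E₀ := fun h => hEpure v (h ▸ hvD) hxv
      by_cases hz : ∃ z, z ∈ F ∧ ¬ G.Adj x z ∧ z ∉ E₀ ∧ z ∉ C ∧ z ∉ D
      -- ======== case (b) : prison {u, v, w₀, z, x} ========
      · obtain ⟨z, hzF, hxz, hzE₀, hzC, hzD⟩ := hz
        obtain ⟨Ez, hEz, hzEz⟩ := classOf z hzF
        have hEzE₀ : Ez ≠ E₀ := fun h => hzE₀ (h ▸ hzEz)
        have hEzC : Ez ≠ C := fun h => hzC (h ▸ hzEz)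
        have hEzD : Ez ≠ D := fun h => hzD (h ▸ hzEz)
        have hpr := mkPrison G u v w₀ z x
          (adj_ne hC hD huC hvD hCD) (adj_ne hC hE₀P huC hw₀E hCE₀)
          (adj_ne hC hEz huC hzEz hEzC.symm) (adj_ne hD hE₀P hvD hw₀E hDE₀)
          (adj_ne hD hEz hvD hzEz hEzD.symm) (adj_ne hE₀P hEz hw₀E hzEz hEzE₀.symm)
          hxu hxv hxw₀ hxz
          (fun h => hxF (by rw [h]; exact hw₀F)) (fun h => hxF (by rw [h]; exact hzF))
        exact no_prison_three G S h2 _ hpr u v w₀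
          (by simp) (by simp) (by simp)
          (adj_ne hC hD huC hvD hCD).ne (adj_ne hC hE₀P huC hw₀E hCE₀).ne
          (adj_ne hD hE₀P hvD hw₀E hDE₀).ne
          (hFS u huF) (hFS v hvF) (hFS w₀ hw₀F)
      -- ======== case (d) : extend F by joining x to class E₀ ========
      · have hrest : ∀ y ∈ F, y ∉ E₀ → G.Adj x y := by
          intro y hyF hyE
          by_contra hn
          by_cases hyC : y ∈ C
          · exact hmix ⟨C, hC, ⟨u, huC, hxu⟩, ⟨y, hyC, hn⟩⟩
          · by_cases hyD : y ∈ D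
            · exact hmix ⟨D, hD, ⟨v, hvD, hxv⟩, ⟨y, hyD, hn⟩⟩
            · exact hz ⟨y, hyF, hn, hyE, hyC, hyD⟩
        apply hmaxkill
        have hCiE : C ≠ insert x E₀ := fun h => hxF (memF hC (h.symm ▸ Set.mem_insert x E₀))
        have hDiE : D ≠ insert x E₀ := fun h => hxF (memF hD (h.symm ▸ Set.mem_insert x E₀))
        have hdisjE : ∀ L, L ∈ P \ {E₀} → Disjoint (insert x E₀) L := by
          intro L hL'
          refine Set.disjoint_left.mpr ?_
          intro a haK haL
          rcases Set.mem_insert_iff.mp haK with rfl | haE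
          · exact hxF (memF hL'.1 haL)
          · exact Set.disjoint_left.mp
              (hdisj E₀ hE₀P L hL'.1 (fun h => hL'.2 h.symm)) haE haL
        have hxside : ∀ b ∈ F,
            (G.Adj x b ↔ ¬∃ K ∈ insert (insert x E₀) (P \ {E₀}), x ∈ K ∧ b ∈ K) := by
          intro b hbF
          by_cases hbE : b ∈ E₀
          · exact iff_of_false (hEpure b hbE)
              (fun h => h ⟨insert x E₀, Set.mem_insert _ _, Set.mem_insert _ _,
                Set.mem_insert_of_mem _ hbE⟩)
          · refine iff_of_true (hrest b hbF hbE) ?_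
            rintro ⟨K, hK, hxK, hbK⟩
            rcases Set.mem_insert_iff.mp hK with rfl | hK'
            · rcases Set.mem_insert_iff.mp hbK with h | h
              · exact hxF (h ▸ hbF)
              · exact hbE h
            · exact hxF (memF hK'.1 hxK)
        refine ⟨insert (insert x E₀) (P \ {E₀}), ⟨?_, ?_, ?_, ?_⟩,
          ⟨![C, D, insert x E₀], ?_⟩, ?_⟩
        · intro K hK
          rcases Set.mem_insert_iff.mp hK with rfl | hK'
          · exact ⟨⟨x, Set.mem_insert x E₀⟩,
              Set.insert_subset_insert (hcls E₀ hE₀P).2⟩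
          · exact ⟨(hcls K hK'.1).1, (hcls K hK'.1).2.trans (Set.subset_insert x F)⟩
        · ext y
          simp only [Set.mem_sUnion, Set.mem_insert_iff]
          constructor
          · rintro ⟨K, hK, hyK⟩
            rcases hK with rfl | hK'
            · rcases Set.mem_insert_iff.mp hyK with h | h
              · exact Or.inl h
              · exact Or.inr (memF hE₀P h)
            · exact Or.inr (memF hK'.1 hyK)
          · rintro (hyx | hyF)
            · exact ⟨insert x E₀, Or.inl rfl, by rw [hyx]; exact Set.mem_insert x E₀⟩
            · obtain ⟨K, hK, hyK⟩ := classOf y hyF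
              by_cases hKE : K = E₀
              · exact ⟨insert x E₀, Or.inl rfl, Set.mem_insert_of_mem _ (hKE ▸ hyK)⟩
              · exact ⟨K, Or.inr ⟨hK, hKE⟩, hyK⟩
        · intro K hK L hL hKL
          rcases Set.mem_insert_iff.mp hK with rfl | hK' <;>
            rcases Set.mem_insert_iff.mp hL with rfl | hL'
          · exact absurd rfl hKL
          · exact hdisjE L hL'
          · exact (hdisjE K hK').symm
          · exact hdisj K hK'.1 L hL'.1 hKL
        · intro a ha b hb
          rcases Set.mem_insert_iff.mp ha with hax | haF
          · rcases Set.mem_insert_iff.mp hb with hbx | hbF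
            · rw [hax, hbx]
              exact iff_of_false (G.irrefl)
                (fun h => h ⟨insert x E₀, Set.mem_insert _ _, Set.mem_insert _ _,
                  Set.mem_insert _ _⟩)
            · rw [hax]
              exact hxside b hbF
          · rcases Set.mem_insert_iff.mp hb with hbx | hbF
            · rw [hbx]
              constructor
              · rintro h ⟨K, hK, haK, hbK⟩
                exact (hxside a haF).mp h.symm ⟨K, hK, hbK, haK⟩
              · intro h
                refine ((hxside a haF).mpr ?_).symm
                rintro ⟨K, hK, hxK, haK⟩
                exact h ⟨K, hK, haK, hxK⟩
            · rw [hadj a haF b hbF]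
              apply not_congr
              constructor
              · rintro ⟨K, hK, ha1, hb1⟩
                by_cases hKE : K = E₀
                · exact ⟨insert x E₀, Set.mem_insert _ _,
                    Set.mem_insert_of_mem _ (hKE ▸ ha1), Set.mem_insert_of_mem _ (hKE ▸ hb1)⟩
                · exact ⟨K, Set.mem_insert_of_mem _ ⟨hK, hKE⟩, ha1, hb1⟩
              · rintro ⟨K, hK, ha1, hb1⟩
                rcases Set.mem_insert_iff.mp hK with rfl | hK'
                · have ha' : a ∈ E₀ := by
                    rcases Set.mem_insert_iff.mp ha1 with h | h
                    · exact absurd (h ▸ haF) hxF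
                    · exact h
                  have hb' : b ∈ E₀ := by
                    rcases Set.mem_insert_iff.mp hb1 with h | h
                    · exact absurd (h ▸ hbF) hxF
                    · exact h
                  exact ⟨E₀, hE₀P, ha', hb'⟩
                · exact ⟨K, hK'.1, ha1, hb1⟩
        · intro i j hij
          fin_cases i <;> fin_cases j <;>
            simp only [Matrix.cons_val_zero, Matrix.cons_val_one, Matrix.head_cons,
              Matrix.cons_val_two, Matrix.tail_cons, Fin.mk_zero, Fin.mk_one] at hij ⊢ <;>
            first
              | rfl
              | exact absurd hij hCD | exact absurd hij hDC
              | exact absurd hij hCiE | exact absurd hij hCiE.symm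
              | exact absurd hij hDiE | exact absurd hij hDiE.symm
        · intro i
          fin_cases i
          · exact Set.mem_insert_of_mem _ ⟨hC, fun h => hCE₀ h⟩
          · exact Set.mem_insert_of_mem _ ⟨hD, fun h => hDE₀ h⟩
          · exact Set.mem_insert _ _


end PrisonFreePaper
end
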